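/- For every constant α > 0 there exist constants c > 0 and C > 0 such that for all sufficiently large even n the following holds for the SEMO and the GSEMO maximizing COCZ: started from any population state in which the population consists entirely of Pareto-optimal individuals, has size at least α·n, and has distance to the Pareto borders at least √n, with probability at least 1 − C/n the algorithm performs at least c·n²·ln n objective-function evaluations before the objective values of the population cover the Pareto front of COCZ. -/

import Mathlib

open scoped ENNReal

namespace GSEMOPaper

attribute [local instance] Classical.propDecidable

/-- An individual (bit string) of length `n`. -/
abbrev Individual (n : ℕ) := Fin n → Bool

/-- `u` weakly dominates `v` (maximization, two objectives). -/
def weaklyDom (u v : ℝ × ℝ) : Prop := v.1 ≤ u.1 ∧ v.2 ≤ u.2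

/-- `u` strictly dominates `v`. -/
def strictlyDom (u v : ℝ × ℝ) : Prop := weaklyDom u v ∧ u ≠ v

/-- The Pareto front of a bi-objective function on bit strings. -/
def paretoFront {n : ℕ} (f : Individual n → ℝ × ℝ) : Set (ℝ × ℝ) :=
  {u | ∃ x : Individual n, f x = u ∧ ∀ y : Individual n, ¬ strictlyDom (f y) (f x)}

/-- The objective values of the population `P` cover the Pareto front of `f`. -/
def covers {n : ℕ} (f : Individual n → ℝ × ℝ) (P : Finset (Individual n)) : Prop :=
  paretoFront f ⊆ f '' (P : Set (Individual n))

/-- A valid (G)SEMO population: distinct members are mutually non-dominated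
(in particular they have pairwise distinct objective values). -/
def validPop {n : ℕ} (f : Individual n → ℝ × ℝ) (P : Finset (Individual n)) : Prop :=
  ∀ x ∈ P, ∀ y ∈ P, x ≠ y → ¬ weaklyDom (f x) (f y)

/-- Survival selection of the (G)SEMO: remove all individuals weakly dominated by the
offspring `y`, then insert `y` unless it is strictly dominated by a remaining individual. -/
noncomputable def updatePop {n : ℕ} (f : Individual n → ℝ × ℝ)
    (P : Finset (Individual n)) (y : Individual n) : Finset (Individual n) :=
  let Q := P.filter fun z => ¬ weaklyDom (f y) (f z)
  if ∃ z ∈ Q, strictlyDom (f z) (f y) then Q else insert y Q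

/-- Flip position `i` of `x`. -/
def flipOne {n : ℕ} (x : Individual n) (i : Fin n) : Individual n :=
  Function.update x i (!x i)

/-- One-bit mutation (SEMO): flip exactly one uniformly random position. -/
noncomputable def oneBitMut {n : ℕ} (x : Individual n) : PMF (Individual n) :=
  if h : n = 0 then PMF.pure x
  else
    haveI : Nonempty (Fin n) := ⟨⟨0, Nat.pos_of_ne_zero h⟩⟩
    (PMF.uniformOfFintype (Fin n)).map (flipOne x)

/-- A vector of `m` independent Bernoulli(`p`) bits. -/
noncomputable def bernoulliVec (p : ℝ≥0∞) (hp : p ≤ 1) : (m : ℕ) → PMF (Fin m → Bool)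
  | 0 => PMF.pure fun i => i.elim0
  | m + 1 => (PMF.ofFintype (fun b => cond b p (1 - p))
      (by rw [Fintype.sum_bool]; exact add_tsub_cancel_of_le hp)).bind fun b => (bernoulliVec p hp m).map fun v => Fin.cons b v

/-- Standard bit mutation (GSEMO): flip each position independently with probability `1/n`. -/
noncomputable def stdBitMut {n : ℕ} (x : Individual n) : PMF (Individual n) :=
  if h : n = 0 then PMF.pure x
  else
    (bernoulliVec ((n : ℝ≥0∞))⁻¹
        (ENNReal.inv_le_one.mpr (by exact_mod_cast Nat.one_le_iff_ne_zero.mpr h)) n).map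
      fun mask => fun j => if mask j then !x j else x j

/-- One iteration of the (G)SEMO maximizing `f`, with mutation operator `mutOp`:
choose a parent uniformly at random from the population, mutate it, and perform
survival selection. -/
noncomputable def semoStep {n : ℕ} (f : Individual n → ℝ × ℝ)
    (mutOp : Individual n → PMF (Individual n))
    (P : Finset (Individual n)) : PMF (Finset (Individual n)) :=
  if h : P.Nonempty then
    (PMF.uniformOfFinset P h).bind fun x => (mutOp x).map fun y => updatePop f P y
  else PMF.pure P

/-- One iteration of the modified (G)SEMO: choose `i ∈ {0, …, m}` uniformly at random;
if the population contains no individual `z` with `idx z = i`, nothing happens;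
otherwise the (unique) such individual is the parent. -/
noncomputable def modStep {n : ℕ} (f : Individual n → ℝ × ℝ)
    (mutOp : Individual n → PMF (Individual n))
    (idx : Individual n → ℕ) (m : ℕ)
    (P : Finset (Individual n)) : PMF (Finset (Individual n)) :=
  (PMF.uniformOfFintype (Fin (m + 1))).bind fun i =>
    let S := P.filter fun z => idx z = (i : ℕ)
    if h : S.Nonempty then
      (PMF.uniformOfFinset S h).bind fun x => (mutOp x).map fun y => updatePop f P y
    else PMF.pure P

/-- Distribution of the trajectory (list of states, most recent first) of `t` iterations of
the Markov chain with one-step kernel `step`, started in state `s`. The resulting lists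
have length `t + 1` and record the states `P⁽ᵗ⁾, …, P⁽⁰⁾`. -/
noncomputable def run {σ : Type*} [Inhabited σ] (step : σ → PMF σ) (s : σ) : ℕ → PMF (List σ)
  | 0 => PMF.pure [s]
  | t + 1 => (run step s t).bind fun l => (step l.headI).map fun s' => s' :: l

/-- The probability that a sample from `p` lies in the event `E`. -/
noncomputable def prob {α : Type*} (p : PMF α) (E : Set α) : ℝ≥0∞ := p.toOuterMeasure E

/-- The uniform distribution on `{0,1}ⁿ` used for initialization. -/
noncomputable def uniformInit (n : ℕ) : PMF (Individual n) :=
  PMF.uniformOfFintype (Individual n)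

/-- The number of ones of a bit string. -/
def ones {n : ℕ} (x : Individual n) : ℕ :=
  (Finset.univ.filter fun i : Fin n => x i = true).card

/-- The number of zeros of a bit string. -/
def zeros {n : ℕ} (x : Individual n) : ℕ :=
  (Finset.univ.filter fun i : Fin n => x i = false).card

/-- `g₁ x`: the number of ones in the first half (positions `0, …, n/2 - 1`). -/
def g1 {n : ℕ} (x : Individual n) : ℕ :=
  (Finset.univ.filter fun i : Fin n => (i : ℕ) < n / 2 ∧ x i = true).card

/-- `g₂ x`: the number of ones in the second half (positions `n/2, …, n - 1`). -/
def g2 {n : ℕ} (x : Individual n) : ℕ :=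
  (Finset.univ.filter fun i : Fin n => n / 2 ≤ (i : ℕ) ∧ x i = true).card

/-- The COCZ benchmark: `COCZ(x) = (g₁(x) + g₂(x), g₁(x) + n/2 − g₂(x))`. -/
noncomputable def cocz {n : ℕ} (x : Individual n) : ℝ × ℝ :=
  (((g1 x + g2 x : ℕ) : ℝ), (g1 x : ℝ) + (n : ℝ) / 2 - (g2 x : ℝ))

/-- The OneMinMax benchmark: `OMM(x) = (|x|₁, n − |x|₁)`. -/
noncomputable def omm {n : ℕ} (x : Individual n) : ℝ × ℝ :=
  ((ones x : ℝ), (n : ℝ) - (ones x : ℝ))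

/-- The OJZJ benchmark with gap parameter `k`. -/
noncomputable def ojzj (n k : ℕ) (x : Individual n) : ℝ × ℝ :=
  ((if ones x ≤ n - k ∨ x = fun _ => true then ((k + ones x : ℕ) : ℝ)
      else ((n - ones x : ℕ) : ℝ)),
   (if zeros x ≤ n - k ∨ x = fun _ => false then ((k + zeros x : ℕ) : ℝ)
      else ((n - zeros x : ℕ) : ℝ)))



noncomputable def Ex {β : Type*} (p : PMF β) (f : β → ℝ≥0∞) : ℝ≥0∞ := ∑' b, p b * f b


lemma Ex_pure {β : Type*} (a : β) (f : β → ℝ≥0∞) : Ex (PMF.pure a) f = f a := by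
  rw [Ex, tsum_eq_single a]
  · simp
  · intro b hb; simp [PMF.pure_apply, hb]

lemma Ex_bind {β γ : Type*} (p : PMF β) (q : β → PMF γ) (f : γ → ℝ≥0∞) :
    Ex (p.bind q) f = ∑' b, p b * Ex (q b) f := by
  simp only [Ex, PMF.bind_apply]
  calc ∑' c, (∑' b, p b * q b c) * f c
      = ∑' c, ∑' b, p b * q b c * f c := by
        refine tsum_congr fun c => ?_; rw [ENNReal.tsum_mul_right]
    _ = ∑' b, ∑' c, p b * q b c * f c := ENNReal.tsum_comm
    _ = ∑' b, p b * ∑' c, q b c * f c := by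
        refine tsum_congr fun b => ?_
        rw [← ENNReal.tsum_mul_left]
        exact tsum_congr fun c => by ring

lemma Ex_map {β γ : Type*} (p : PMF β) (g : β → γ) (f : γ → ℝ≥0∞) :
    Ex (p.map g) f = Ex p (fun b => f (g b)) := by
  rw [PMF.map, Ex_bind]
  exact tsum_congr fun b => by
    show p b * Ex (PMF.pure (g b)) f = _
    rw [Ex_pure]

lemma Ex_mono_support {β : Type*} {p : PMF β} {f g : β → ℝ≥0∞}
    (h : ∀ b, p b ≠ 0 → f b ≤ g b) : Ex p f ≤ Ex p g := by
  refine ENNReal.tsum_le_tsum fun b => ?_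
  by_cases hb : p b = 0
  · simp [hb]
  · exact mul_le_mul_right (h b hb) _

lemma Ex_const {β : Type*} (p : PMF β) (c : ℝ≥0∞) : Ex p (fun _ => c) = c := by
  rw [Ex, ENNReal.tsum_mul_right, p.tsum_coe, one_mul]

lemma Ex_add {β : Type*} (p : PMF β) (f g : β → ℝ≥0∞) :
    Ex p (fun b => f b + g b) = Ex p f + Ex p g := by
  simp only [Ex, mul_add, ENNReal.tsum_add]

lemma Ex_finsetSum {β ι : Type*} (p : PMF β) (s : Finset ι) (F : ι → β → ℝ≥0∞) :
    Ex p (fun b => ∑ m ∈ s, F m b) = ∑ m ∈ s, Ex p (F m) := by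
  classical
  induction s using Finset.induction_on with
  | empty => simp [Ex_const]
  | insert _ _ hni ih =>
    rw [Finset.sum_insert hni]
    rw [show (fun b => ∑ m ∈ insert _ _, F m b) = fun b => F _ b + ∑ m ∈ _, F m b from
      funext fun b => Finset.sum_insert hni, Ex_add, ih]

lemma Ex_uniformOfFinset {β : Type*} {s : Finset β} (hs : s.Nonempty) (f : β → ℝ≥0∞) :
    Ex (PMF.uniformOfFinset s hs) f = ∑ b ∈ s, (s.card : ℝ≥0∞)⁻¹ * f b := by
  rw [Ex, tsum_eq_sum (s := s)]
  · exact Finset.sum_congr rfl fun b hb => by rw [PMF.uniformOfFinset_apply, if_pos hb]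
  · intro b hb; rw [PMF.uniformOfFinset_apply, if_neg hb, zero_mul]

lemma Ex_le_const {β : Type*} {p : PMF β} {f : β → ℝ≥0∞} {c : ℝ≥0∞}
    (h : ∀ b, p b ≠ 0 → f b ≤ c) : Ex p f ≤ c := by
  calc Ex p f ≤ Ex p (fun _ => c) := Ex_mono_support h
    _ = c := Ex_const p c

lemma prob_le_Ex {β : Type*} {p : PMF β} {E : Set β} {f : β → ℝ≥0∞}
    (h : ∀ b, p b ≠ 0 → b ∈ E → 1 ≤ f b) : prob p E ≤ Ex p f := by
  rw [prob, PMF.toOuterMeasure_apply]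
  refine ENNReal.tsum_le_tsum fun b => ?_
  by_cases hb : p b = 0
  · simp [Set.indicator_apply, hb]
  · by_cases hbE : b ∈ E
    · rw [Set.indicator_of_mem hbE]
      calc p b = p b * 1 := (mul_one _).symm
        _ ≤ p b * f b := mul_le_mul_right (h b hb hbE) _
    · simp [Set.indicator_of_notMem hbE]

lemma prob_mono_support {β : Type*} {p : PMF β} {E F : Set β}
    (h : ∀ b, p b ≠ 0 → b ∈ E → b ∈ F) : prob p E ≤ prob p F := by
  rw [prob, prob, PMF.toOuterMeasure_apply, PMF.toOuterMeasure_apply]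
  refine ENNReal.tsum_le_tsum fun b => ?_
  by_cases hb : p b = 0
  · by_cases hbE : b ∈ E <;> simp [Set.indicator_apply, hb]
  · by_cases hbE : b ∈ E
    · rw [Set.indicator_of_mem hbE, Set.indicator_of_mem (h b hb hbE)]
    · simp [Set.indicator_of_notMem hbE]

lemma prob_union_le {β : Type*} (p : PMF β) (E F : Set β) :
    prob p (E ∪ F) ≤ prob p E + prob p F :=
  MeasureTheory.measure_union_le (μ := p.toOuterMeasure) E F

lemma prob_biUnion_le {β ι : Type*} (p : PMF β) (s : Finset ι) (E : ι → Set β) :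
    prob p (⋃ i ∈ s, E i) ≤ ∑ i ∈ s, prob p (E i) := by
  classical
  induction s using Finset.induction_on with
  | empty => simp [prob, PMF.toOuterMeasure_apply]
  | insert _ _ hni ih =>
    rw [Finset.sum_insert hni]
    refine le_trans ?_ (add_le_add_right ih _)
    refine le_trans (le_of_eq ?_) (prob_union_le p _ _)
    congr 1
    simp [Set.biUnion_insert]

lemma prob_map {β γ : Type*} (p : PMF β) (g : β → γ) (E : Set γ) :
    prob (p.map g) E = prob p (g ⁻¹' E) := PMF.toOuterMeasure_map_apply g p E

lemma prob_bind {β γ : Type*} (p : PMF β) (q : β → PMF γ) (E : Set γ) :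
    prob (p.bind q) E = ∑' b, p b * prob (q b) E := PMF.toOuterMeasure_bind_apply p q E

lemma prob_pure {β : Type*} (a : β) (E : Set β) :
    prob (PMF.pure a) E = if a ∈ E then 1 else 0 := PMF.toOuterMeasure_pure_apply a E

lemma one_le_prob_add_compl {β : Type*} (p : PMF β) (E : Set β) :
    1 ≤ prob p E + prob p Eᶜ := by
  have h1 : prob p Set.univ = 1 := by
    rw [prob, PMF.toOuterMeasure_apply]
    simp [Set.indicator_univ, p.tsum_coe]
  calc (1:ℝ≥0∞) = prob p Set.univ := h1.symm
    _ = prob p (E ∪ Eᶜ) := by rw [Set.union_compl_self]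
    _ ≤ _ := prob_union_le p E Eᶜ

section COCZBasics

variable {n : ℕ}

/-- The set of "bad" positions: zeros in the first half, ones in the second half. -/
noncomputable def bad {n : ℕ} (z : Individual n) : Finset (Fin n) :=
  Finset.univ.filter fun i => ((i : ℕ) < n / 2 ∧ z i = false) ∨ (n / 2 ≤ (i : ℕ) ∧ z i = true)

noncomputable def phi {n : ℕ} (z : Individual n) : ℕ := (bad z).card

lemma card_filter_lt (n k : ℕ) (hk : k ≤ n) :
    ((Finset.univ : Finset (Fin n)).filter fun i : Fin n => (i : ℕ) < k).card = k := by
  have h : ((Finset.univ : Finset (Fin n)).filter fun i : Fin n => (i : ℕ) < k)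
      = Finset.map (Fin.castLEEmb hk) (Finset.univ : Finset (Fin k)) := by
    ext i
    simp only [Finset.mem_filter, Finset.mem_univ, true_and, Finset.mem_map]
    constructor
    · intro hi
      exact ⟨⟨(i : ℕ), hi⟩, by ext; rfl⟩
    · rintro ⟨j, -, rfl⟩
      exact j.isLt
  rw [h, Finset.card_map, Finset.card_univ, Fintype.card_fin]

lemma phi_add_g1 (z : Individual n) : phi z + g1 z = n / 2 + g2 z := by
  classical
  have hsplit : phi z =
      ((Finset.univ : Finset (Fin n)).filter fun i : Fin n => (i : ℕ) < n / 2 ∧ z i = false).card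
      + g2 z := by
    rw [phi, bad, Finset.filter_or, Finset.card_union_of_disjoint, g2]
    rw [Finset.disjoint_left]
    intro i h1 h2
    simp only [Finset.mem_filter, Finset.mem_univ, true_and] at h1 h2
    omega
  have hhalf : ((Finset.univ : Finset (Fin n)).filter fun i : Fin n => (i : ℕ) < n / 2 ∧ z i = false).card
      + g1 z = n / 2 := by
    rw [g1, ← Finset.card_union_of_disjoint, ← Finset.filter_or]
    · have : ((Finset.univ : Finset (Fin n)).filter fun i : Fin n =>
          ((i : ℕ) < n / 2 ∧ z i = false) ∨ ((i : ℕ) < n / 2 ∧ z i = true))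
          = (Finset.univ : Finset (Fin n)).filter fun i : Fin n => (i : ℕ) < n / 2 := by
        apply Finset.filter_congr
        intro i _
        constructor
        · rintro (h | h) <;> exact h.1
        · intro h
          cases hzi : z i
          · exact Or.inl ⟨h, rfl⟩
          · exact Or.inr ⟨h, rfl⟩
      rw [this]
      exact card_filter_lt n (n / 2) (Nat.div_le_self n 2)
    · rw [Finset.disjoint_left]
      intro i h1 h2
      simp only [Finset.mem_filter, Finset.mem_univ, true_and] at h1 h2
      rw [h1.2] at h2
      exact absurd h2.2 (by simp)
  omega

lemma phi_le_n (z : Individual n) : phi z ≤ n := by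
  calc phi z ≤ (Finset.univ : Finset (Fin n)).card := Finset.card_le_univ _
    _ = n := by simp


lemma half_cast (hn : Even n) : ((n / 2 : ℕ) : ℝ) = (n : ℝ) / 2 := by
  obtain ⟨m, rfl⟩ := hn
  have : (m + m) / 2 = m := by omega
  rw [this]
  push_cast
  ring

lemma cocz_snd (hn : Even n) (z : Individual n) : (cocz z).2 = (n : ℝ) - phi z := by
  have h := phi_add_g1 z
  have hm : (phi z : ℝ) + (g1 z : ℝ) = ((n / 2 : ℕ) : ℝ) + (g2 z : ℝ) := by exact_mod_cast h
  rw [half_cast hn] at hm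
  have h2 : (2 : ℝ) * ((n : ℝ) / 2) = n := by ring
  simp only [cocz]
  linarith

lemma phi_mono_dom (hn : Even n) {a b : Individual n} (h : weaklyDom (cocz a) (cocz b)) :
    phi a ≤ phi b := by
  have h2 := h.2
  rw [cocz_snd hn, cocz_snd hn] at h2
  have : (phi a : ℝ) ≤ phi b := by linarith
  exact_mod_cast this

lemma phi_injOn (hn : Even n) {P : Finset (Individual n)} (hv : validPop cocz P) :
    ∀ x ∈ P, ∀ y ∈ P, phi x = phi y → x = y := by
  intro x hx y hy hxy
  by_contra hne
  have h2 : (cocz x).2 = (cocz y).2 := by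
    rw [cocz_snd hn, cocz_snd hn, hxy]
  rcases le_total (cocz x).1 (cocz y).1 with h1 | h1
  · exact hv y hy x hx (Ne.symm hne) ⟨h1, h2.le⟩
  · exact hv x hx y hy hne ⟨h1, h2.ge⟩

noncomputable def Ymin {n : ℕ} (P : Finset (Individual n)) : ℕ :=
  sInf (phi '' (P : Set (Individual n)))

lemma Ymin_le {P : Finset (Individual n)} {z : Individual n} (hz : z ∈ P) : Ymin P ≤ phi z :=
  Nat.sInf_le ⟨z, hz, rfl⟩

lemma exists_Ymin {P : Finset (Individual n)} (h : P.Nonempty) :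
    ∃ z ∈ P, phi z = Ymin P := by
  obtain ⟨z, hz⟩ := h
  have hne : (phi '' (P : Set (Individual n))).Nonempty := ⟨phi z, z, hz, rfl⟩
  obtain ⟨w, hw, hphi⟩ := Nat.sInf_mem hne
  exact ⟨w, hw, hphi⟩

end COCZBasics

section UpdateLemmas

variable {n : ℕ} {f : Individual n → ℝ × ℝ} {P : Finset (Individual n)} {y : Individual n}

lemma updatePop_subset : updatePop f P y ⊆ insert y P := by
  simp only [updatePop]
  split_ifs
  · exact (Finset.filter_subset _ _).trans (Finset.subset_insert _ _)
  · exact Finset.insert_subset_insert _ (Finset.filter_subset _ _)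

lemma updatePop_nonempty (h : P.Nonempty) : (updatePop f P y).Nonempty := by
  simp only [updatePop]
  split_ifs with hc
  · obtain ⟨z, hz, -⟩ := hc
    exact ⟨z, hz⟩
  · exact ⟨y, Finset.mem_insert_self _ _⟩

lemma mem_updatePop {w : Individual n} (hw : w ∈ updatePop f P y) :
    (w ∈ P ∧ ¬ weaklyDom (f y) (f w)) ∨ w = y := by
  simp only [updatePop] at hw
  split_ifs at hw with hc
  · rw [Finset.mem_filter] at hw
    exact Or.inl hw
  · rcases Finset.mem_insert.mp hw with h | h
    · exact Or.inr h
    · rw [Finset.mem_filter] at h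
      exact Or.inl h

lemma y_mem_updatePop (h : ∀ z ∈ P, ¬ weaklyDom (f y) (f z) → ¬ strictlyDom (f z) (f y)) :
    y ∈ updatePop f P y := by
  simp only [updatePop]
  rw [if_neg]
  · exact Finset.mem_insert_self _ _
  · rintro ⟨z, hz, hd⟩
    rw [Finset.mem_filter] at hz
    exact h z hz.1 hz.2 hd

lemma mem_updatePop_of_mem {z : Individual n} (hz : z ∈ P) (hzy : ¬ weaklyDom (f y) (f z)) :
    z ∈ updatePop f P y := by
  simp only [updatePop]
  split_ifs
  · exact Finset.mem_filter.mpr ⟨hz, hzy⟩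
  · exact Finset.mem_insert_of_mem (Finset.mem_filter.mpr ⟨hz, hzy⟩)

lemma not_cond_of_y_mem (hy : y ∈ updatePop f P y) :
    ¬ ∃ z ∈ P.filter (fun w => ¬ weaklyDom (f y) (f w)), strictlyDom (f z) (f y) := by
  intro hc
  have heq : updatePop f P y = P.filter fun w => ¬ weaklyDom (f y) (f w) := by
    simp only [updatePop]
    rw [if_pos hc]
  rw [heq, Finset.mem_filter] at hy
  exact hy.2 ⟨le_rfl, le_rfl⟩

lemma updatePop_valid (hv : validPop f P) : validPop f (updatePop f P y) := by
  intro a ha b hb hne hdom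
  rcases mem_updatePop ha with ⟨haP, hay⟩ | rfl
  · rcases mem_updatePop hb with ⟨hbP, hby⟩ | rfl
    · exact hv a haP b hbP hne hdom
    · by_cases heq : f a = f b
      · exact hay (by rw [heq]; exact ⟨le_rfl, le_rfl⟩)
      · -- b(=y) is in the population, so the insert branch was taken; but a strictly dominates y
        have hbU : b ∈ updatePop f P b := hb
        exact not_cond_of_y_mem hbU ⟨a, Finset.mem_filter.mpr ⟨haP, hay⟩, hdom, heq⟩
  · rcases mem_updatePop hb with ⟨hbP, hby⟩ | rfl
    · exact hby hdom
    · exact hne rfl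

lemma updatePop_front_mem {v : ℝ × ℝ} (hvf : v ∈ paretoFront f) (hq : v ∈ P.image f) :
    v ∈ (updatePop f P y).image f := by
  classical
  obtain ⟨x0, hx0v, hnd⟩ := hvf
  obtain ⟨z, hz, hzv⟩ := Finset.mem_image.mp hq
  by_cases hw : weaklyDom (f y) (f z)
  · have hfy : f y = f z := by
      by_contra hne
      exact hnd y ⟨by rw [hx0v, ← hzv]; exact hw, by rw [hx0v, ← hzv]; exact hne⟩
    have hyU : y ∈ updatePop f P y := by
      apply y_mem_updatePop
      intro w hwP hw1 hw2
      refine hnd w ⟨?_, ?_⟩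
      · rw [hx0v, ← hzv, ← hfy]; exact hw2.1
      · rw [hx0v, ← hzv, ← hfy]; exact hw2.2
    exact Finset.mem_image.mpr ⟨y, hyU, by rw [hfy, hzv]⟩
  · exact Finset.mem_image.mpr ⟨z, mem_updatePop_of_mem hz hw, hzv⟩

lemma Ymin_updatePop_le (hn : Even n) (hne : P.Nonempty) (y : Individual n) :
    Ymin (updatePop cocz P y) ≤ Ymin P := by
  obtain ⟨z0, hz0, hz0Y⟩ := exists_Ymin hne
  by_cases hw : weaklyDom (cocz y) (cocz z0)
  · have hphiy : phi y ≤ phi z0 := phi_mono_dom hn hw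
    by_cases hc : ∃ z ∈ P.filter (fun w => ¬ weaklyDom (cocz y) (cocz w)),
        strictlyDom (cocz z) (cocz y)
    · obtain ⟨w, hwQ, hwd⟩ := hc
      have hwU : w ∈ updatePop cocz P y := by
        simp only [updatePop]
        rw [if_pos ⟨w, hwQ, hwd⟩]
        exact hwQ
      calc Ymin (updatePop cocz P y) ≤ phi w := Ymin_le hwU
        _ ≤ phi y := phi_mono_dom hn hwd.1
        _ ≤ phi z0 := hphiy
        _ = Ymin P := hz0Y
    · have hyU : y ∈ updatePop cocz P y :=
        y_mem_updatePop fun z hz h1 h2 => hc ⟨z, Finset.mem_filter.mpr ⟨hz, h1⟩, h2⟩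
      calc Ymin (updatePop cocz P y) ≤ phi y := Ymin_le hyU
        _ ≤ phi z0 := hphiy
        _ = Ymin P := hz0Y
  · calc Ymin (updatePop cocz P y) ≤ phi z0 := Ymin_le (mem_updatePop_of_mem hz0 hw)
      _ = Ymin P := hz0Y

lemma min_le_Ymin_updatePop (hne : P.Nonempty) (y : Individual n) :
    min (Ymin P) (phi y) ≤ Ymin (updatePop cocz P y) := by
  obtain ⟨w, hwU, hwY⟩ := exists_Ymin (updatePop_nonempty (f := cocz) (y := y) hne)
  rw [← hwY]
  rcases Finset.mem_insert.mp (updatePop_subset hwU) with h | h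
  · rw [h]
    exact min_le_right _ _
  · exact le_trans (min_le_left _ _) (Ymin_le h)

end UpdateLemmas

section Front

variable {n : ℕ}

lemma g1_le_half (z : Individual n) : g1 z ≤ n / 2 := by
  rw [g1]
  calc ((Finset.univ : Finset (Fin n)).filter fun i : Fin n => (i : ℕ) < n / 2 ∧ z i = true).card
      ≤ ((Finset.univ : Finset (Fin n)).filter fun i : Fin n => (i : ℕ) < n / 2).card :=
        Finset.card_le_card fun i hi => by
          rw [Finset.mem_filter] at hi ⊢
          exact ⟨hi.1, hi.2.1⟩
    _ = n / 2 := card_filter_lt n (n / 2) (Nat.div_le_self n 2)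

lemma phi_zero_iff {z : Individual n} : phi z = 0 ↔ g1 z = n / 2 ∧ g2 z = 0 := by
  have h1 := phi_add_g1 z
  have h2 := g1_le_half z
  omega

noncomputable def xstar (n : ℕ) : Individual n := fun i => decide ((i : ℕ) < n / 2)

lemma phi_xstar : phi (xstar n) = 0 := by
  rw [phi, Finset.card_eq_zero, bad, Finset.filter_eq_empty_iff]
  intro i _
  by_cases h : (i : ℕ) < n / 2 <;> simp [xstar, h] <;> omega

lemma cocz_eq_of_phi_zero {z w : Individual n} (hz : phi z = 0) (hw : phi w = 0) :
    cocz z = cocz w := by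
  obtain ⟨hz1, hz2⟩ := phi_zero_iff.mp hz
  obtain ⟨hw1, hw2⟩ := phi_zero_iff.mp hw
  simp [cocz, hz1, hz2, hw1, hw2]

lemma phi_eq_zero_of_snd (hn : Even n) {z w : Individual n} (hw : phi w = 0)
    (h : (cocz w).2 ≤ (cocz z).2) : phi z = 0 := by
  rw [cocz_snd hn, cocz_snd hn, hw] at h
  have : (phi z : ℝ) ≤ 0 := by push_cast at h ⊢; linarith
  exact_mod_cast le_antisymm (by exact_mod_cast this) (Nat.zero_le _)

lemma xstar_front (hn : Even n) : cocz (xstar n) ∈ paretoFront (cocz (n := n)) := by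
  refine ⟨xstar n, rfl, ?_⟩
  intro w hw
  have hphiw : phi w = 0 := phi_eq_zero_of_snd hn phi_xstar hw.1.2
  exact hw.2 (cocz_eq_of_phi_zero hphiw phi_xstar)

lemma Ymin_eq_zero_of_covers (hn : Even n) {Q : Finset (Individual n)} (hc : covers cocz Q) :
    Ymin Q = 0 := by
  obtain ⟨z, hzQ, hzv⟩ := hc (xstar_front hn)
  have hphi : phi z = 0 :=
    phi_eq_zero_of_snd hn phi_xstar (le_of_eq (congrArg Prod.snd hzv).symm)
  exact Nat.le_zero.mp (hphi ▸ Ymin_le hzQ)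

lemma phi_eq_g2 {z : Individual n} (hz : g1 z = n / 2) : phi z = g2 z := by
  have := phi_add_g1 z
  omega

end Front

section Mutation

variable {n : ℕ}

lemma mem_bad {z : Individual n} {i : Fin n} :
    i ∈ bad z ↔ (((i : ℕ) < n / 2 ∧ z i = false) ∨ (n / 2 ≤ (i : ℕ) ∧ z i = true)) := by
  rw [bad, Finset.mem_filter]
  simp

lemma bernoulliVec_prob (p : ℝ≥0∞) (hp : p ≤ 1) (m : ℕ) :
    ∀ S : Finset (Fin m),
      prob (bernoulliVec p hp m) {v | ∀ i ∈ S, v i = true} = p ^ S.card := by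
  induction m with
  | zero =>
    intro S
    have hS : S = ∅ := Finset.eq_empty_of_isEmpty S
    subst hS
    rw [bernoulliVec, prob, PMF.toOuterMeasure_pure_apply, if_pos (by simp)]
    simp
  | succ m ih =>
    intro S
    rw [bernoulliVec, prob, PMF.toOuterMeasure_bind_apply, tsum_bool]
    set T : Finset (Fin m) := S.preimage Fin.succ (Fin.succ_injective m).injOn with hTdef
    have hmemT : ∀ j : Fin m, j ∈ T ↔ j.succ ∈ S := fun j => Finset.mem_preimage
    have himg : S.erase 0 = T.image Fin.succ := by
      ext i
      constructor
      · intro hi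
        have hi0 : i ≠ 0 := Finset.ne_of_mem_erase hi
        have hiS : i ∈ S := Finset.mem_of_mem_erase hi
        obtain ⟨j, rfl⟩ := Fin.eq_succ_of_ne_zero hi0
        exact Finset.mem_image.mpr ⟨j, (hmemT j).mpr hiS, rfl⟩
      · intro hi
        obtain ⟨j, hj, rfl⟩ := Finset.mem_image.mp hi
        exact Finset.mem_erase.mpr ⟨Fin.succ_ne_zero j, (hmemT j).mp hj⟩
    have hcard : (S.erase 0).card = T.card := by
      rw [himg, Finset.card_image_of_injective _ (Fin.succ_injective m)]
    have hpre_true : (fun w : Fin m → Bool => Fin.cons true w) ⁻¹'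
        {v : Fin (m+1) → Bool | ∀ i ∈ S, v i = true} = {w | ∀ j ∈ T, w j = true} := by
      ext w
      simp only [Set.mem_preimage, Set.mem_setOf_eq]
      constructor
      · intro h j hj
        have := h j.succ ((hmemT j).mp hj)
        rwa [Fin.cons_succ] at this
      · intro h i hi
        rcases Fin.eq_zero_or_eq_succ i with rfl | ⟨j, rfl⟩
        · rw [Fin.cons_zero]
        · rw [Fin.cons_succ]
          exact h j ((hmemT j).mpr hi)
    rw [PMF.toOuterMeasure_map_apply, PMF.toOuterMeasure_map_apply, hpre_true]
    by_cases h0 : (0 : Fin (m+1)) ∈ S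
    · have hpre_false : (fun w : Fin m → Bool => Fin.cons false w) ⁻¹'
          {v : Fin (m+1) → Bool | ∀ i ∈ S, v i = true} = ∅ := by
        ext w
        simp only [Set.mem_preimage, Set.mem_setOf_eq, Set.mem_empty_iff_false, iff_false]
        intro h
        have := h 0 h0
        rw [Fin.cons_zero] at this
        exact Bool.false_ne_true this
      have hScard : S.card = T.card + 1 := by
        have h1 : (S.erase 0).card = S.card - 1 := Finset.card_erase_of_mem h0
        have h2 : 0 < S.card := Finset.card_pos.mpr ⟨0, h0⟩
        omega
      rw [hpre_false]
      have hempty : (bernoulliVec p hp m).toOuterMeasure ∅ = 0 := by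
        simp [PMF.toOuterMeasure_apply]
      rw [hempty, mul_zero, zero_add, PMF.ofFintype_apply]
      have := ih T
      rw [prob] at this
      rw [this, hScard, pow_succ]
      simp [mul_comm]
    · have hpre_false : (fun w : Fin m → Bool => Fin.cons false w) ⁻¹'
          {v : Fin (m+1) → Bool | ∀ i ∈ S, v i = true} = {w | ∀ j ∈ T, w j = true} := by
        ext w
        simp only [Set.mem_preimage, Set.mem_setOf_eq]
        constructor
        · intro h j hj
          have := h j.succ ((hmemT j).mp hj)
          rwa [Fin.cons_succ] at this
        · intro h i hi
          rcases Fin.eq_zero_or_eq_succ i with rfl | ⟨j, rfl⟩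
          · exact absurd hi h0
          · rw [Fin.cons_succ]
            exact h j ((hmemT j).mpr hi)
      have hScard : S.card = T.card := by
        have := Finset.erase_eq_of_notMem h0
        rw [← hcard, this]
      rw [hpre_false]
      have := ih T
      rw [prob] at this
      rw [this, hScard, PMF.ofFintype_apply, PMF.ofFintype_apply]
      have hsum : (1 - p) + p = 1 := tsub_add_cancel_of_le hp
      calc (bif false then p else 1 - p) * p ^ T.card + (bif true then p else 1 - p) * p ^ T.card
          = ((1 - p) + p) * p ^ T.card := by simp [add_mul]
        _ = p ^ T.card := by rw [hsum, one_mul]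

lemma flip_tail (p : ℝ≥0∞) (hp : p ≤ 1) (m : ℕ) (A : Finset (Fin m)) (k : ℕ) :
    prob (bernoulliVec p hp m) {v | k ≤ (A.filter fun i => v i = true).card}
      ≤ (A.card.choose k) * p ^ k := by
  have hsub : {v : Fin m → Bool | k ≤ (A.filter fun i => v i = true).card} ⊆
      ⋃ S ∈ A.powersetCard k, {v : Fin m → Bool | ∀ i ∈ S, v i = true} := by
    intro v hv
    obtain ⟨S, hS, hScard⟩ := Finset.exists_subset_card_eq hv
    refine Set.mem_biUnion (Finset.mem_powersetCard.mpr
      ⟨hS.trans (Finset.filter_subset _ _), hScard⟩) ?_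
    intro i hi
    exact (Finset.mem_filter.mp (hS hi)).2
  calc prob (bernoulliVec p hp m) {v | k ≤ (A.filter fun i => v i = true).card}
      ≤ prob (bernoulliVec p hp m)
        (⋃ S ∈ A.powersetCard k, {v : Fin m → Bool | ∀ i ∈ S, v i = true}) :=
        prob_mono_support fun b _ hb => hsub hb
    _ ≤ ∑ S ∈ A.powersetCard k, prob (bernoulliVec p hp m) {v | ∀ i ∈ S, v i = true} :=
        prob_biUnion_le _ _ _
    _ = ∑ _S ∈ A.powersetCard k, p ^ k := by
        refine Finset.sum_congr rfl fun S hS => ?_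
        rw [bernoulliVec_prob, (Finset.mem_powersetCard.mp hS).2]
    _ = (A.card.choose k) * p ^ k := by
        rw [Finset.sum_const, Finset.card_powersetCard, nsmul_eq_mul]

lemma phi_mask_ge (x : Individual n) (mask : Fin n → Bool) :
    phi x ≤ phi (fun j => if mask j then !x j else x j)
      + ((bad x).filter fun i => mask i = true).card := by
  set y : Individual n := fun j => if mask j then !x j else x j with hy
  set F := (bad x).filter fun i => mask i = true with hF
  have hsub : bad x \ F ⊆ bad y := by
    intro i hi
    rw [Finset.mem_sdiff] at hi
    have hmaski : mask i = false := by
      cases h : mask i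
      · rfl
      · exact absurd (Finset.mem_filter.mpr ⟨hi.1, h⟩) hi.2
    have hval : y i = x i := by rw [hy]; simp [hmaski]
    rw [mem_bad, hval]
    exact mem_bad.mp hi.1
  have h1 : (bad x \ F).card + F.card = (bad x).card :=
    Finset.card_sdiff_add_card_eq_card (Finset.filter_subset _ _)
  have h2 : (bad x \ F).card ≤ (bad y).card := Finset.card_le_card hsub
  rw [phi, phi]
  omega

lemma bad_flipOne_superset {x : Individual n} {i : Fin n} :
    bad x \ {i} ⊆ bad (flipOne x i) := by
  intro j hj
  rw [Finset.mem_sdiff, Finset.mem_singleton] at hj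
  have hval : flipOne x i j = x j := by
    rw [flipOne, Function.update_apply, if_neg hj.2]
  rw [mem_bad, hval]
  exact mem_bad.mp hj.1

lemma phi_flipOne_ge (x : Individual n) (i : Fin n) : phi x ≤ phi (flipOne x i) + 1 := by
  have h2 := Finset.card_le_card (bad_flipOne_superset (x := x) (i := i))
  have h3 : (bad x).card ≤ (bad x \ {i}).card + 1 := by
    have := Finset.card_sdiff_add_card_eq_card (Finset.inter_subset_left (s₂ := {i}) (s₁ := bad x))
    have h4 : (bad x \ ({i} : Finset (Fin n))) = bad x \ (bad x ∩ {i}) := by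
      rw [Finset.sdiff_inter_self_left]
    rw [← h4] at this
    have h5 : (bad x ∩ {i}).card ≤ 1 := by
      calc (bad x ∩ {i}).card ≤ ({i} : Finset (Fin n)).card :=
            Finset.card_le_card (Finset.inter_subset_right)
        _ = 1 := Finset.card_singleton i
    omega
  rw [phi, phi]
  omega

lemma mem_bad_of_phi_flipOne_lt {x : Individual n} {i : Fin n}
    (h : phi (flipOne x i) < phi x) : i ∈ bad x := by
  by_contra hib
  have hsub : bad x ⊆ bad (flipOne x i) := by
    intro j hj
    have hji : j ≠ i := fun he => hib (he ▸ hj)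
    exact bad_flipOne_superset (Finset.mem_sdiff.mpr ⟨hj, by simpa using hji⟩)
  exact absurd (Finset.card_le_card hsub) (by rw [phi, phi] at h; omega)

lemma prob_uniformOfFintype_le {γ : Type*} [Fintype γ] [Nonempty γ] {E : Set γ} {T : Finset γ}
    (h : ∀ a ∈ E, a ∈ T) :
    prob (PMF.uniformOfFintype γ) E ≤ T.card * (Fintype.card γ : ℝ≥0∞)⁻¹ := by
  rw [prob, PMF.toOuterMeasure_apply, tsum_fintype]
  calc ∑ a : γ, E.indicator (⇑(PMF.uniformOfFintype γ)) a
      ≤ ∑ a : γ, if a ∈ T then (Fintype.card γ : ℝ≥0∞)⁻¹ else 0 := by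
        refine Finset.sum_le_sum fun a _ => ?_
        by_cases haE : a ∈ E
        · rw [Set.indicator_of_mem haE, if_pos (h a haE), PMF.uniformOfFintype_apply]
        · simp [Set.indicator_of_notMem haE]
    _ = ∑ _a ∈ T, (Fintype.card γ : ℝ≥0∞)⁻¹ := by
        rw [Finset.sum_ite_mem]
        congr 1
        exact Finset.univ_inter T
    _ = T.card * (Fintype.card γ : ℝ≥0∞)⁻¹ := by
        rw [Finset.sum_const, nsmul_eq_mul]

lemma mut_tail (hn : n ≠ 0) {mutOp : Individual n → PMF (Individual n)}
    (hmut : mutOp = oneBitMut ∨ mutOp = stdBitMut) (x : Individual n) (m : ℕ)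
    (hm : m < phi x) :
    prob (mutOp x) {y : Individual n | phi y ≤ m}
      ≤ ((phi x).choose (phi x - m)) * ((n : ℝ≥0∞)⁻¹) ^ (phi x - m) := by
  rcases hmut with rfl | rfl
  · rw [oneBitMut, dif_neg hn]
    haveI : Nonempty (Fin n) := ⟨⟨0, Nat.pos_of_ne_zero hn⟩⟩
    rw [prob, PMF.toOuterMeasure_map_apply]
    by_cases hk : phi x - m = 1
    · rw [hk]
      have hsub : ∀ a ∈ (flipOne x · ) ⁻¹' {y : Individual n | phi y ≤ m}, a ∈ bad x := by
        intro i hi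
        simp only [Set.mem_preimage, Set.mem_setOf_eq] at hi
        exact mem_bad_of_phi_flipOne_lt (lt_of_le_of_lt hi hm)
      calc (PMF.uniformOfFintype (Fin n)).toOuterMeasure
            ((flipOne x · ) ⁻¹' {y : Individual n | phi y ≤ m})
          ≤ (bad x).card * (Fintype.card (Fin n) : ℝ≥0∞)⁻¹ := prob_uniformOfFintype_le hsub
        _ = ((phi x).choose 1) * ((n : ℝ≥0∞)⁻¹) ^ 1 := by
            rw [Nat.choose_one_right, Fintype.card_fin, pow_one, phi]
    · have hpre : (flipOne x · ) ⁻¹' {y : Individual n | phi y ≤ m} = ∅ := by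
        ext i
        simp only [Set.mem_preimage, Set.mem_setOf_eq, Set.mem_empty_iff_false, iff_false]
        intro hle
        have := phi_flipOne_ge x i
        omega
      rw [hpre]
      simp [PMF.toOuterMeasure_apply]
  · rw [stdBitMut, dif_neg hn]
    rw [prob, PMF.toOuterMeasure_map_apply]
    set k := phi x - m with hkdef
    have hsub : ∀ mask ∈ (fun mask : Fin n → Bool => fun j => if mask j then !x j else x j) ⁻¹'
        {y : Individual n | phi y ≤ m},
        mask ∈ {mask : Fin n → Bool | k ≤ ((bad x).filter fun i => mask i = true).card} := by
      intro mask hmask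
      simp only [Set.mem_preimage, Set.mem_setOf_eq] at hmask ⊢
      have h1 := phi_mask_ge x mask
      omega
    calc (bernoulliVec _ _ n).toOuterMeasure ((fun mask : Fin n → Bool =>
            fun j => if mask j then !x j else x j) ⁻¹' {y : Individual n | phi y ≤ m})
        ≤ prob (bernoulliVec _ _ n)
            {mask : Fin n → Bool | k ≤ ((bad x).filter fun i => mask i = true).card} :=
          prob_mono_support fun b _ hb => hsub b hb
      _ ≤ ((bad x).card.choose k) * ((n : ℝ≥0∞)⁻¹) ^ k := flip_tail _ _ n (bad x) k
      _ = ((phi x).choose k) * ((n : ℝ≥0∞)⁻¹) ^ k := by rw [phi]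

end Mutation

section Arith

lemma ennreal_ratio {a b n : ℕ} (hn : n ≠ 0) (h : 2 * a ≤ n * b) :
    (a : ℝ≥0∞) * ((n : ℝ≥0∞))⁻¹ ≤ 2⁻¹ * (b : ℝ≥0∞) := by
  have h1 : (2 : ℝ≥0∞) * a ≤ (n : ℝ≥0∞) * b := by exact_mod_cast h
  have h2 : (2 : ℝ≥0∞) * 2⁻¹ = 1 := ENNReal.mul_inv_cancel (by norm_num) (by norm_num)
  have h3 : (n : ℝ≥0∞) * ((n : ℝ≥0∞))⁻¹ = 1 :=
    ENNReal.mul_inv_cancel (by exact_mod_cast hn) (by simp)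
  have e1 : ((2 : ℝ≥0∞) * a) * (2⁻¹ * ((n : ℝ≥0∞))⁻¹) = (a : ℝ≥0∞) * ((n : ℝ≥0∞))⁻¹ := by
    calc ((2 : ℝ≥0∞) * a) * (2⁻¹ * ((n : ℝ≥0∞))⁻¹)
        = ((2 : ℝ≥0∞) * 2⁻¹) * ((a : ℝ≥0∞) * ((n : ℝ≥0∞))⁻¹) := by ring
      _ = (a : ℝ≥0∞) * ((n : ℝ≥0∞))⁻¹ := by rw [h2, one_mul]
  have e2 : ((n : ℝ≥0∞) * b) * (2⁻¹ * ((n : ℝ≥0∞))⁻¹) = 2⁻¹ * (b : ℝ≥0∞) := by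
    calc ((n : ℝ≥0∞) * b) * (2⁻¹ * ((n : ℝ≥0∞))⁻¹)
        = ((n : ℝ≥0∞) * ((n : ℝ≥0∞))⁻¹) * (2⁻¹ * (b : ℝ≥0∞)) := by ring
      _ = 2⁻¹ * (b : ℝ≥0∞) := by rw [h3, one_mul]
  calc (a : ℝ≥0∞) * ((n : ℝ≥0∞))⁻¹ = ((2 : ℝ≥0∞) * a) * (2⁻¹ * ((n : ℝ≥0∞))⁻¹) := e1.symm
    _ ≤ ((n : ℝ≥0∞) * b) * (2⁻¹ * ((n : ℝ≥0∞))⁻¹) := mul_le_mul_left h1 _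
    _ = 2⁻¹ * (b : ℝ≥0∞) := e2

lemma term_ratio {n m v : ℕ} (hn : n ≠ 0) (hm2 : 2 * (m + 1) ≤ n) (hv : m ≤ v) :
    (((v+1).choose (v+1-m) : ℕ) : ℝ≥0∞) * (((n : ℝ≥0∞))⁻¹) ^ (v+1-m)
      ≤ 2⁻¹ * (((v.choose (v-m) : ℕ) : ℝ≥0∞) * (((n : ℝ≥0∞))⁻¹) ^ (v-m)) := by
  have hvm : v + 1 - m = (v - m) + 1 := by omega
  set d := v - m with hd
  have hid : (v+1) * v.choose d = (v+1).choose (d+1) * (d+1) := Nat.add_one_mul_choose_eq v d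
  have key : v + 1 ≤ (m+1) * (d+1) := by
    have h : (m+1)*(d+1) = m*d + m + d + 1 := by ring
    omega
  have h2 : 2 * (v + 1) ≤ n * (d + 1) := by
    calc 2 * (v+1) ≤ 2 * ((m+1)*(d+1)) := Nat.mul_le_mul_left _ key
      _ = (2*(m+1)) * (d+1) := by ring
      _ ≤ n * (d+1) := Nat.mul_le_mul_right _ hm2
  have h3 : (2 * (v+1).choose (d+1)) * (d+1) ≤ (n * v.choose d) * (d+1) := by
    calc (2 * (v+1).choose (d+1)) * (d+1) = 2 * ((v+1).choose (d+1) * (d+1)) := by ring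
      _ = 2 * ((v+1) * v.choose d) := by rw [← hid]
      _ = (2 * (v+1)) * v.choose d := by ring
      _ ≤ (n * (d+1)) * v.choose d := Nat.mul_le_mul_right _ h2
      _ = (n * v.choose d) * (d+1) := by ring
  have hnat : 2 * (v+1).choose (d+1) ≤ n * v.choose d :=
    Nat.le_of_mul_le_mul_right h3 (by omega)
  rw [hvm, pow_succ]
  calc (((v+1).choose (d+1) : ℕ) : ℝ≥0∞) * ((((n : ℝ≥0∞))⁻¹) ^ d * ((n : ℝ≥0∞))⁻¹)
      = ((((v+1).choose (d+1) : ℕ) : ℝ≥0∞) * ((n : ℝ≥0∞))⁻¹) * (((n : ℝ≥0∞))⁻¹) ^ d := by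
        ring
    _ ≤ (2⁻¹ * ((v.choose d : ℕ) : ℝ≥0∞)) * (((n : ℝ≥0∞))⁻¹) ^ d :=
        mul_le_mul_left (ennreal_ratio hn hnat) _
    _ = 2⁻¹ * (((v.choose d : ℕ) : ℝ≥0∞) * (((n : ℝ≥0∞))⁻¹) ^ d) := by ring

lemma term_le {n m Y : ℕ} (hn : n ≠ 0) (hm2 : 2 * (m + 1) ≤ n) (hmY : m ≤ Y) : ∀ j : ℕ,
    (((Y+j).choose (Y+j-m) : ℕ) : ℝ≥0∞) * (((n : ℝ≥0∞))⁻¹) ^ (Y+j-m)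
      ≤ (2⁻¹ : ℝ≥0∞) ^ j * (((Y.choose (Y-m) : ℕ) : ℝ≥0∞) * (((n : ℝ≥0∞))⁻¹) ^ (Y-m)) := by
  intro j
  induction j with
  | zero => simp
  | succ j ih =>
    have hstep := term_ratio (v := Y + j) hn hm2 (le_trans hmY (Nat.le_add_right Y j))
    have hYj : Y + (j+1) = (Y+j) + 1 := rfl
    rw [hYj]
    calc (((Y+j+1).choose (Y+j+1-m) : ℕ) : ℝ≥0∞) * (((n : ℝ≥0∞))⁻¹) ^ (Y+j+1-m)
        ≤ 2⁻¹ * ((((Y+j).choose (Y+j-m) : ℕ) : ℝ≥0∞) * (((n : ℝ≥0∞))⁻¹) ^ (Y+j-m)) := hstep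
      _ ≤ 2⁻¹ * ((2⁻¹ : ℝ≥0∞) ^ j *
          (((Y.choose (Y-m) : ℕ) : ℝ≥0∞) * (((n : ℝ≥0∞))⁻¹) ^ (Y-m))) :=
          mul_le_mul_right ih _
      _ = (2⁻¹ : ℝ≥0∞) ^ (j+1) *
          (((Y.choose (Y-m) : ℕ) : ℝ≥0∞) * (((n : ℝ≥0∞))⁻¹) ^ (Y-m)) := by ring

lemma geom_sum_le' {n m Y M : ℕ} (hn : n ≠ 0) (hm2 : 2 * (m + 1) ≤ n) (hmY : m ≤ Y) :
    ∑ v ∈ Finset.Icc Y M, ((v.choose (v-m) : ℕ) : ℝ≥0∞) * (((n : ℝ≥0∞))⁻¹) ^ (v-m)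
      ≤ 2 * (((Y.choose (Y-m) : ℕ) : ℝ≥0∞) * (((n : ℝ≥0∞))⁻¹) ^ (Y-m)) := by
  classical
  have hsub : Finset.Icc Y M ⊆ (Finset.range (M+1)).image (Y + ·) := by
    intro v hv
    rw [Finset.mem_Icc] at hv
    exact Finset.mem_image.mpr ⟨v - Y, Finset.mem_range.mpr (by omega), by omega⟩
  have hinj : ∀ x ∈ Finset.range (M+1), ∀ y ∈ Finset.range (M+1), Y + x = Y + y → x = y := by
    intro x _ y _ h
    omega
  calc ∑ v ∈ Finset.Icc Y M, ((v.choose (v-m) : ℕ) : ℝ≥0∞) * (((n : ℝ≥0∞))⁻¹) ^ (v-m)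
      ≤ ∑ v ∈ (Finset.range (M+1)).image (Y + ·),
          ((v.choose (v-m) : ℕ) : ℝ≥0∞) * (((n : ℝ≥0∞))⁻¹) ^ (v-m) :=
        Finset.sum_le_sum_of_subset hsub
    _ = ∑ j ∈ Finset.range (M+1),
          (((Y+j).choose (Y+j-m) : ℕ) : ℝ≥0∞) * (((n : ℝ≥0∞))⁻¹) ^ (Y+j-m) :=
        Finset.sum_image hinj
    _ ≤ ∑ j ∈ Finset.range (M+1), (2⁻¹ : ℝ≥0∞) ^ j *
          (((Y.choose (Y-m) : ℕ) : ℝ≥0∞) * (((n : ℝ≥0∞))⁻¹) ^ (Y-m)) :=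
        Finset.sum_le_sum fun j _ => term_le hn hm2 hmY j
    _ = (∑ j ∈ Finset.range (M+1), (2⁻¹ : ℝ≥0∞) ^ j) *
          (((Y.choose (Y-m) : ℕ) : ℝ≥0∞) * (((n : ℝ≥0∞))⁻¹) ^ (Y-m)) := by
        rw [Finset.sum_mul]
    _ ≤ 2 * (((Y.choose (Y-m) : ℕ) : ℝ≥0∞) * (((n : ℝ≥0∞))⁻¹) ^ (Y-m)) := by
        refine mul_le_mul_left ?_ _
        calc ∑ j ∈ Finset.range (M+1), (2⁻¹ : ℝ≥0∞) ^ j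
            ≤ ∑' j : ℕ, (2⁻¹ : ℝ≥0∞) ^ j := ENNReal.sum_le_tsum _
          _ = (1 - 2⁻¹)⁻¹ := ENNReal.tsum_geometric 2⁻¹
          _ = 2 := by rw [ENNReal.one_sub_inv_two]; simp

lemma wbound (m : ℕ) :
    1/((m:ℝ)+1)^3 - 1/((m:ℝ)+2)^3 ≤ 7/(((m:ℝ)+1)*((m:ℝ)+2)^3) := by
  have hm0 : (0:ℝ) ≤ m := Nat.cast_nonneg m
  have h1 : 1/((m:ℝ)+1)^3 - 1/((m:ℝ)+2)^3
      = (((m:ℝ)+2)^3 - ((m:ℝ)+1)^3) / (((m:ℝ)+1)^3*((m:ℝ)+2)^3) := by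
    field_simp
  have h2 : ((m:ℝ)+2)^3 - ((m:ℝ)+1)^3 ≤ 7*((m:ℝ)+1)^2 := by nlinarith
  rw [h1]
  calc (((m:ℝ)+2)^3 - ((m:ℝ)+1)^3) / (((m:ℝ)+1)^3*((m:ℝ)+2)^3)
      ≤ (7*((m:ℝ)+1)^2) / (((m:ℝ)+1)^3*((m:ℝ)+2)^3) := by gcongr
    _ = 7/(((m:ℝ)+1)*((m:ℝ)+2)^3) := by
        field_simp

lemma two_mul_add_one_le (i : ℕ) : 2*i+1 ≤ 3*2^i := by
  induction i with
  | zero => norm_num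
  | succ i ih =>
    have h : 1 ≤ 2^i := Nat.one_le_two_pow
    calc 2*(i+1)+1 = (2*i+1) + 2 := by ring
      _ ≤ 3*2^i + 2 := by omega
      _ ≤ 3*2^i + 3*2^i := by omega
      _ = 3*2^(i+1) := by ring

lemma choose_le_two_pow' (y i : ℕ) : y.choose i ≤ 2^y := by
  by_cases h : i ≤ y
  · calc y.choose i ≤ ∑ k ∈ Finset.range (y+1), y.choose k :=
        Finset.single_le_sum (fun k _ => Nat.zero_le _) (Finset.mem_range.mpr (by omega))
      _ = 2^y := Nat.sum_range_choose y
  · rw [Nat.choose_eq_zero_of_lt (by omega)]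
    exact Nat.zero_le _

lemma pow_le_aux {x : ℝ} (hx0 : 0 ≤ x) (hx : x ≤ 2⁻¹) {i : ℕ} (hi : 1 ≤ i) :
    x^i ≤ ((2:ℝ)⁻¹)^(i-1) * x := by
  obtain ⟨j, rfl⟩ : ∃ j, i = j + 1 := ⟨i-1, by omega⟩
  rw [Nat.add_sub_cancel, pow_succ]
  exact mul_le_mul (pow_le_pow_left₀ hx0 hx j) le_rfl hx0 (by positivity)

lemma lemA_term {n m i : ℕ} (hn : 100 ≤ n) (hy2 : 2*(m+i) ≤ n) (hi1 : 1 ≤ i) :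
    (1/((m:ℝ)+1)^3 - 1/((m:ℝ)+2)^3) * ((m+i).choose i) / (n:ℝ)^i
      ≤ 900*((2:ℝ)⁻¹)^(i-1)/((n:ℝ)*((m:ℝ)+(i:ℝ)+1)^3) := by
  have hm0 : (0:ℝ) ≤ m := Nat.cast_nonneg m
  have hi0 : (1:ℝ) ≤ i := by exact_mod_cast hi1
  have hn0 : (0:ℝ) < n := by positivity
  have hnn : (100:ℝ) ≤ n := by exact_mod_cast hn
  have hyn : 2*((m:ℝ)+i) ≤ n := by exact_mod_cast hy2
  have hmi0 : (0:ℝ) < (m:ℝ)+i := by linarith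
  have hw0 : 0 ≤ 1/((m:ℝ)+1)^3 - 1/((m:ℝ)+2)^3 := by
    have h12 : ((m:ℝ)+1)^3 ≤ ((m:ℝ)+2)^3 := by nlinarith
    have h13 := one_div_le_one_div_of_le (by positivity : (0:ℝ) < ((m:ℝ)+1)^3) h12
    linarith
  by_cases hcase : i ≤ m + 2
  · -- small jumps
    have hchoose : (((m+i).choose i : ℕ) : ℝ) ≤ ((m:ℝ)+i)^i := by
      calc (((m+i).choose i : ℕ) : ℝ) ≤ (((m+i)^i : ℕ) : ℝ) := by
            exact_mod_cast Nat.choose_le_pow (m+i) i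
        _ = ((m:ℝ)+i)^i := by push_cast; ring
    have hw := wbound m
    have ha : ((m:ℝ)+i) ≤ 2*((m:ℝ)+1) := by
      have : (i:ℝ) ≤ (m:ℝ)+2 := by exact_mod_cast hcase
      linarith
    have hb : ((m:ℝ)+i+1) ≤ 2*((m:ℝ)+2) := by
      have : (i:ℝ) ≤ (m:ℝ)+2 := by exact_mod_cast hcase
      linarith
    have hb3 : ((m:ℝ)+i+1)^3 ≤ 8*((m:ℝ)+2)^3 := by
      calc ((m:ℝ)+i+1)^3 ≤ (2*((m:ℝ)+2))^3 := by
            apply pow_le_pow_left₀ (by linarith) hb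
        _ = 8*((m:ℝ)+2)^3 := by ring
    have hstep1 : (1/((m:ℝ)+1)^3 - 1/((m:ℝ)+2)^3) * ((m+i).choose i) / (n:ℝ)^i
        ≤ (112/(((m:ℝ)+i)*((m:ℝ)+i+1)^3)) * (((m:ℝ)+i)^i / (n:ℝ)^i) := by
      have hd : 7/(((m:ℝ)+1)*((m:ℝ)+2)^3) ≤ 112/(((m:ℝ)+i)*((m:ℝ)+i+1)^3) := by
        rw [div_le_div_iff₀ (by positivity) (by positivity)]
        calc 7 * (((m:ℝ)+i)*((m:ℝ)+i+1)^3)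
            ≤ 7 * ((2*((m:ℝ)+1))*(8*((m:ℝ)+2)^3)) := by
              refine mul_le_mul_of_nonneg_left ?_ (by norm_num)
              apply mul_le_mul ha hb3 (by positivity) (by positivity)
          _ = 112 * (((m:ℝ)+1)*((m:ℝ)+2)^3) := by ring
      calc (1/((m:ℝ)+1)^3 - 1/((m:ℝ)+2)^3) * ((m+i).choose i) / (n:ℝ)^i
          ≤ (7/(((m:ℝ)+1)*((m:ℝ)+2)^3)) * ((m:ℝ)+i)^i / (n:ℝ)^i := by
            gcongr
        _ ≤ (112/(((m:ℝ)+i)*((m:ℝ)+i+1)^3)) * ((m:ℝ)+i)^i / (n:ℝ)^i := by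
            gcongr
        _ = (112/(((m:ℝ)+i)*((m:ℝ)+i+1)^3)) * (((m:ℝ)+i)^i / (n:ℝ)^i) := by
            rw [mul_div_assoc]
    have hfrac : ((m:ℝ)+i)/(n:ℝ) ≤ 2⁻¹ := by
      rw [div_le_iff₀ hn0]
      linarith
    have hstep2 : (112/(((m:ℝ)+i)*((m:ℝ)+i+1)^3)) * (((m:ℝ)+i)^i / (n:ℝ)^i)
        ≤ 112*((2:ℝ)⁻¹)^(i-1)/((n:ℝ)*((m:ℝ)+(i:ℝ)+1)^3) := by
      have hfp := pow_le_aux (x := ((m:ℝ)+i)/(n:ℝ)) (by positivity) hfrac hi1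
      calc (112/(((m:ℝ)+i)*((m:ℝ)+i+1)^3)) * (((m:ℝ)+i)^i / (n:ℝ)^i)
          = (112/(((m:ℝ)+i)*((m:ℝ)+i+1)^3)) * ((((m:ℝ)+i)/(n:ℝ))^i) := by
            rw [div_pow]
        _ ≤ (112/(((m:ℝ)+i)*((m:ℝ)+i+1)^3)) * (((2:ℝ)⁻¹)^(i-1) * (((m:ℝ)+i)/(n:ℝ))) := by
            gcongr
        _ = 112*((2:ℝ)⁻¹)^(i-1)/((n:ℝ)*((m:ℝ)+(i:ℝ)+1)^3) := by
            have hzn : (n:ℝ) ≠ 0 := ne_of_gt hn0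
            have hz1 : (m:ℝ)+i ≠ 0 := ne_of_gt hmi0
            have hz2 : (m:ℝ)+i+1 ≠ 0 := by positivity
            field_simp
    calc (1/((m:ℝ)+1)^3 - 1/((m:ℝ)+2)^3) * ((m+i).choose i) / (n:ℝ)^i
        ≤ (112/(((m:ℝ)+i)*((m:ℝ)+i+1)^3)) * (((m:ℝ)+i)^i / (n:ℝ)^i) := hstep1
      _ ≤ 112*((2:ℝ)⁻¹)^(i-1)/((n:ℝ)*((m:ℝ)+(i:ℝ)+1)^3) := hstep2
      _ ≤ 900*((2:ℝ)⁻¹)^(i-1)/((n:ℝ)*((m:ℝ)+(i:ℝ)+1)^3) := by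
          gcongr
          norm_num
  · -- big jumps
    have hyi : m + i ≤ 2*i := by omega
    have hchoose : (((m+i).choose i : ℕ) : ℝ) ≤ (4:ℝ)^i := by
      have h1 : (m+i).choose i ≤ 2^(m+i) := choose_le_two_pow' (m+i) i
      have h2 : (2:ℕ)^(m+i) ≤ 2^(2*i) := Nat.pow_le_pow_right (by norm_num) hyi
      have h3 : (2:ℕ)^(2*i) = 4^i := by
        rw [pow_mul]
        norm_num
      have h4 : (m+i).choose i ≤ 4^i := by omega
      exact_mod_cast h4
    have hw1 : 1/((m:ℝ)+1)^3 - 1/((m:ℝ)+2)^3 ≤ 1 := by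
      have h1 : 1/((m:ℝ)+1)^3 ≤ 1 := by
        rw [div_le_one (by positivity)]
        calc (1:ℝ) = 1^3 := by norm_num
          _ ≤ ((m:ℝ)+1)^3 := pow_le_pow_left₀ (by norm_num) (by linarith) 3
      have h2 : 0 ≤ 1/((m:ℝ)+2)^3 := by positivity
      linarith
    have hcube : ((m:ℝ)+(i:ℝ)+1)^3 ≤ 27*(8:ℝ)^i := by
      have h1 : (m:ℝ)+(i:ℝ)+1 ≤ 3*(2:ℝ)^i := by
        have hn1 : 2*i+1 ≤ 3*2^i := two_mul_add_one_le i
        have hn2 : ((2*i+1 : ℕ):ℝ) ≤ ((3*2^i : ℕ):ℝ) := by exact_mod_cast hn1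
        have hmi : (m:ℝ) + i + 1 ≤ 2*(i:ℝ)+1 := by
          have hmm : m ≤ i := by omega
          have : (m:ℝ) ≤ i := by exact_mod_cast hmm
          linarith
        push_cast at hn2
        linarith
      calc ((m:ℝ)+(i:ℝ)+1)^3 ≤ (3*(2:ℝ)^i)^3 := by
            apply pow_le_pow_left₀ (by positivity) h1
        _ = 27*((2:ℝ)^i)^3 := by ring
        _ = 27*(8:ℝ)^i := by
            rw [← pow_mul, mul_comm i 3, pow_mul]
            norm_num
    have hkey : 27*(32:ℝ)^i ≤ 900*((2:ℝ)⁻¹)^(i-1)*(n:ℝ)^i/(n:ℝ) := by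
      obtain ⟨j, rfl⟩ : ∃ j, i = j + 1 := ⟨i-1, by omega⟩
      rw [Nat.add_sub_cancel]
      have h64 : (64:ℝ)^j ≤ (n:ℝ)^j := by
        apply pow_le_pow_left₀ (by norm_num)
        linarith
      have hns : (n:ℝ)^(j+1)/(n:ℝ) = (n:ℝ)^j := by
        rw [pow_succ]
        field_simp
      rw [mul_div_assoc, hns]
      have hexp : (32:ℝ)^(j+1) = 32*(((2:ℝ)⁻¹)^j*(64:ℝ)^j) := by
        rw [pow_succ]
        have h32 : ((2:ℝ)⁻¹)^j*(64:ℝ)^j = (32:ℝ)^j := by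
          rw [← mul_pow]
          norm_num
        rw [h32]
        ring
      rw [hexp]
      calc 27*(32*(((2:ℝ)⁻¹)^j*(64:ℝ)^j)) = 864*(((2:ℝ)⁻¹)^j*(64:ℝ)^j) := by ring
        _ ≤ 900*(((2:ℝ)⁻¹)^j*(n:ℝ)^j) := by
            refine mul_le_mul (by norm_num) ?_ (by positivity) (by norm_num)
            exact mul_le_mul_of_nonneg_left h64 (by positivity)
        _ = 900*((2:ℝ)⁻¹)^j*(n:ℝ)^j := by ring
    calc (1/((m:ℝ)+1)^3 - 1/((m:ℝ)+2)^3) * ((m+i).choose i) / (n:ℝ)^i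
        ≤ 1 * (4:ℝ)^i / (n:ℝ)^i := by gcongr
      _ = (4:ℝ)^i / (n:ℝ)^i := by rw [one_mul]
      _ ≤ 900*((2:ℝ)⁻¹)^(i-1)/((n:ℝ)*((m:ℝ)+(i:ℝ)+1)^3) := by
          rw [div_le_div_iff₀ (by positivity) (by positivity)]
          calc (4:ℝ)^i * ((n:ℝ)*((m:ℝ)+(i:ℝ)+1)^3)
              ≤ (4:ℝ)^i * ((n:ℝ)*(27*(8:ℝ)^i)) := by gcongr
            _ = (n:ℝ) * (27*(32:ℝ)^i) := by
                rw [show (4:ℝ)^i * ((n:ℝ)*(27*(8:ℝ)^i)) = (n:ℝ)*(27*((4:ℝ)^i*(8:ℝ)^i)) from by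
                  ring, ← mul_pow]
                norm_num
            _ ≤ (n:ℝ) * (900*((2:ℝ)⁻¹)^(i-1)*(n:ℝ)^i/(n:ℝ)) :=
                mul_le_mul_of_nonneg_left hkey (by positivity)
            _ = 900*((2:ℝ)⁻¹)^(i-1) * (n:ℝ)^i := by
                field_simp

end Arith

section LemA

lemma lemA {n y : ℕ} (hn : 100 ≤ n) (hy2 : 2*y ≤ n) :
    ∑ m ∈ Finset.range y,
      (1/((m:ℝ)+1)^3 - 1/((m:ℝ)+2)^3) * (y.choose (y-m)) / (n:ℝ)^(y-m)
      ≤ 2000 / ((n:ℝ) * ((y:ℝ)+1)^3) := by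
  have hterm : ∀ m ∈ Finset.range y,
      (1/((m:ℝ)+1)^3 - 1/((m:ℝ)+2)^3) * (y.choose (y-m)) / (n:ℝ)^(y-m)
      ≤ 900*((2:ℝ)⁻¹)^(y-m-1)/((n:ℝ)*((y:ℝ)+1)^3) := by
    intro m hm
    rw [Finset.mem_range] at hm
    have h1 : m + (y - m) = y := by omega
    have h2 := lemA_term (n := n) (m := m) (i := y - m) hn (by omega) (by omega)
    rw [h1] at h2
    have hc : (m:ℝ) + ((y-m : ℕ):ℝ) = (y:ℝ) := by
      have := Nat.cast_sub (le_of_lt hm) (R := ℝ)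
      rw [this]
      ring
    rw [hc] at h2
    exact h2
  calc ∑ m ∈ Finset.range y,
        (1/((m:ℝ)+1)^3 - 1/((m:ℝ)+2)^3) * (y.choose (y-m)) / (n:ℝ)^(y-m)
      ≤ ∑ m ∈ Finset.range y, 900*((2:ℝ)⁻¹)^(y-m-1)/((n:ℝ)*((y:ℝ)+1)^3) :=
        Finset.sum_le_sum hterm
    _ = (∑ m ∈ Finset.range y, ((2:ℝ)⁻¹)^(y-m-1)) * (900/((n:ℝ)*((y:ℝ)+1)^3)) := by
        rw [Finset.sum_mul]
        refine Finset.sum_congr rfl fun m _ => ?_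
        rw [mul_div_assoc]
        ring
    _ ≤ 2 * (900/((n:ℝ)*((y:ℝ)+1)^3)) := by
        refine mul_le_mul_of_nonneg_right ?_ (by positivity)
        have hrefl : ∑ m ∈ Finset.range y, ((2:ℝ)⁻¹)^(y-m-1)
            = ∑ j ∈ Finset.range y, ((2:ℝ)⁻¹)^j := by
          rw [← Finset.sum_range_reflect (fun j => ((2:ℝ)⁻¹)^j) y]
          refine Finset.sum_congr rfl fun m hm => ?_
          rw [Finset.mem_range] at hm
          congr 1
          omega
        rw [hrefl]
        calc ∑ j ∈ Finset.range y, ((2:ℝ)⁻¹)^j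
            ≤ ∑' j : ℕ, ((2:ℝ)⁻¹)^j :=
              Summable.sum_le_tsum _ (fun i _ => by positivity)
                (summable_geometric_of_lt_one (by norm_num) (by norm_num))
          _ = (1 - 2⁻¹)⁻¹ := tsum_geometric_of_lt_one (by norm_num) (by norm_num)
          _ = 2 := by norm_num
    _ ≤ 2000 / ((n:ℝ) * ((y:ℝ)+1)^3) := by
        rw [show (2:ℝ) * (900/((n:ℝ)*((y:ℝ)+1)^3)) = 1800/((n:ℝ)*((y:ℝ)+1)^3) from by ring]
        gcongr
        norm_num

end LemA

section Potential

noncomputable def Hpot (k : ℕ) : ℝ≥0∞ := ENNReal.ofReal (1/((k:ℝ)+1)^3)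

lemma Hpot_anti {a b : ℕ} (h : a ≤ b) : Hpot b ≤ Hpot a := by
  apply ENNReal.ofReal_le_ofReal
  have hab : ((a:ℝ)+1) ≤ ((b:ℝ)+1) := by
    have : (a:ℝ) ≤ b := by exact_mod_cast h
    linarith
  have h1 : (0:ℝ) < ((a:ℝ)+1)^3 := by positivity
  have h2 : ((a:ℝ)+1)^3 ≤ ((b:ℝ)+1)^3 := pow_le_pow_left₀ (by positivity) hab 3
  exact one_div_le_one_div_of_le h1 h2

lemma Hpot_zero : Hpot 0 = 1 := by
  rw [Hpot]
  norm_num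

lemma Hpot_one_le {k : ℕ} (hk : k = 0) : (1:ℝ≥0∞) ≤ Hpot k := by
  rw [hk, Hpot_zero]

lemma telescope_sum {a b : ℕ} (hab : a ≤ b) :
    ∑ m ∈ Finset.Ico a b, (Hpot m - Hpot (m+1)) = Hpot a - Hpot b := by
  induction b, hab using Nat.le_induction with
  | base => simp
  | succ b hab ih =>
    rw [Finset.sum_Ico_succ_top hab, ih]
    exact tsub_add_tsub_cancel (Hpot_anti hab) (Hpot_anti (Nat.le_succ b))

lemma pointwise_H_bound {n : ℕ} {P : Finset (Individual n)} (hP : P.Nonempty)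
    (y : Individual n) :
    Hpot (Ymin (updatePop cocz P y)) ≤ Hpot (Ymin P)
      + ∑ m ∈ Finset.range (Ymin P),
          (Hpot m - Hpot (m+1)) * (if phi y ≤ m then 1 else 0) := by
  have hmin := min_le_Ymin_updatePop hP y
  by_cases hc : Ymin P ≤ phi y
  · have h1 : Ymin P ≤ Ymin (updatePop cocz P y) := by
      rw [min_eq_left hc] at hmin
      exact hmin
    exact le_add_right (Hpot_anti h1)
  · push_neg at hc
    have h1 : phi y ≤ Ymin (updatePop cocz P y) := by
      rw [min_eq_right (le_of_lt hc)] at hmin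
      exact hmin
    have h2 : ∑ m ∈ Finset.Ico (phi y) (Ymin P), (Hpot m - Hpot (m+1))
        ≤ ∑ m ∈ Finset.range (Ymin P),
            (Hpot m - Hpot (m+1)) * (if phi y ≤ m then 1 else 0) := by
      have hsub : Finset.Ico (phi y) (Ymin P) ⊆ Finset.range (Ymin P) := by
        intro m hm
        rw [Finset.mem_Ico] at hm
        exact Finset.mem_range.mpr hm.2
      calc ∑ m ∈ Finset.Ico (phi y) (Ymin P), (Hpot m - Hpot (m+1))
          = ∑ m ∈ Finset.Ico (phi y) (Ymin P),
              (Hpot m - Hpot (m+1)) * (if phi y ≤ m then 1 else 0) := by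
            refine Finset.sum_congr rfl fun m hm => ?_
            rw [Finset.mem_Ico] at hm
            rw [if_pos hm.1, mul_one]
        _ ≤ _ := Finset.sum_le_sum_of_subset hsub
    calc Hpot (Ymin (updatePop cocz P y)) ≤ Hpot (phi y) := Hpot_anti h1
      _ ≤ Hpot (Ymin P) + (Hpot (phi y) - Hpot (Ymin P)) := le_add_tsub
      _ = Hpot (Ymin P) + ∑ m ∈ Finset.Ico (phi y) (Ymin P), (Hpot m - Hpot (m+1)) := by
          rw [telescope_sum (le_of_lt hc)]
      _ ≤ _ := add_le_add_right h2 _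

end Potential

section StepBound

lemma Ex_bind_uniform {β γ : Type*} {s : Finset β} (hs : s.Nonempty) (q : β → PMF γ)
    (g : γ → ℝ≥0∞) :
    Ex ((PMF.uniformOfFinset s hs).bind q) g = ∑ x ∈ s, (s.card : ℝ≥0∞)⁻¹ * Ex (q x) g := by
  rw [Ex_bind, tsum_eq_sum (s := s)]
  · exact Finset.sum_congr rfl fun x hx => by rw [PMF.uniformOfFinset_apply, if_pos hx]
  · intro x hx
    rw [PMF.uniformOfFinset_apply, if_neg hx, zero_mul]

lemma Ex_ite_prob {β : Type*} (p : PMF β) (q : β → Prop) [DecidablePred q] (c : ℝ≥0∞) :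
    Ex p (fun b => c * (if q b then 1 else 0)) = c * prob p {b | q b} := by
  rw [Ex, prob, PMF.toOuterMeasure_apply, ← ENNReal.tsum_mul_left]
  refine tsum_congr fun b => ?_
  by_cases hb : q b
  · rw [if_pos hb, Set.indicator_of_mem (show b ∈ {b | q b} from hb)]
    ring
  · rw [if_neg hb, Set.indicator_of_notMem (show b ∉ {b | q b} from hb)]
    ring

lemma w_nonneg (m : ℕ) : (0:ℝ) ≤ 1/((m:ℝ)+1)^3 - 1/((m:ℝ)+2)^3 := by
  have h12 : ((m:ℝ)+1)^3 ≤ ((m:ℝ)+2)^3 := by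
    apply pow_le_pow_left₀ (by positivity) (by linarith [(Nat.cast_nonneg m : (0:ℝ) ≤ m)])
  have h13 := one_div_le_one_div_of_le (by positivity : (0:ℝ) < ((m:ℝ)+1)^3) h12
  linarith

lemma step_bound {n : ℕ} (heven : Even n) (hn : 100 ≤ n)
    {mutOp : Individual n → PMF (Individual n)}
    (hmut : mutOp = oneBitMut ∨ mutOp = stdBitMut)
    {P : Finset (Individual n)} (hv : validPop cocz P) (hP : P.Nonempty)
    {α : ℝ} (hα : 0 < α) (hsz : α * n ≤ P.card)
    (hY : 2 * Ymin P ≤ n) :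
    Ex (semoStep cocz mutOp P) (fun Q => Hpot (Ymin Q))
      ≤ (1 + ENNReal.ofReal (4000 / (α * (n:ℝ)^2))) * Hpot (Ymin P) := by
  have hn0 : n ≠ 0 := by omega
  have hnR : (0:ℝ) < n := by positivity
  set Y := Ymin P with hYdef
  set w : ℕ → ℝ≥0∞ := fun m => Hpot m - Hpot (m+1) with hwdef
  set ν : ℝ≥0∞ := ((n : ℝ≥0∞))⁻¹ with hνdef
  -- inner expectation bound per parent
  have hinner : ∀ x ∈ P, Ex (mutOp x) (fun y => Hpot (Ymin (updatePop cocz P y)))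
      ≤ Hpot Y + ∑ m ∈ Finset.range Y, w m * prob (mutOp x) {y : Individual n | phi y ≤ m} := by
    intro x _
    calc Ex (mutOp x) (fun y => Hpot (Ymin (updatePop cocz P y)))
        ≤ Ex (mutOp x) (fun y => Hpot Y + ∑ m ∈ Finset.range Y,
            w m * (if phi y ≤ m then 1 else 0)) :=
          Ex_mono_support fun y _ => pointwise_H_bound hP y
      _ = Hpot Y + ∑ m ∈ Finset.range Y, w m * prob (mutOp x) {y : Individual n | phi y ≤ m} := by
          rw [Ex_add, Ex_const, Ex_finsetSum]
          congr 1
          exact Finset.sum_congr rfl fun m _ => Ex_ite_prob (mutOp x) (fun y => phi y ≤ m) (w m)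
  have hq : ∀ x ∈ P, ∀ m ∈ Finset.range Y, prob (mutOp x) {y : Individual n | phi y ≤ m}
      ≤ (((phi x).choose (phi x - m) : ℕ) : ℝ≥0∞) * ν ^ (phi x - m) := by
    intro x hx m hm
    rw [Finset.mem_range] at hm
    have hmx : m < phi x := lt_of_lt_of_le hm (Ymin_le hx)
    exact mut_tail hn0 hmut x m hmx
  have hexp : Ex (semoStep cocz mutOp P) (fun Q => Hpot (Ymin Q))
      = ∑ x ∈ P, (P.card : ℝ≥0∞)⁻¹ *
          Ex (mutOp x) (fun y => Hpot (Ymin (updatePop cocz P y))) := by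
    rw [semoStep, dif_pos hP, Ex_bind_uniform]
    exact Finset.sum_congr rfl fun x _ => by rw [Ex_map]
  have hcard0 : (P.card : ℝ≥0∞) ≠ 0 := by
    have h : P.card ≠ 0 := Nat.pos_iff_ne_zero.mp (Finset.card_pos.mpr hP)
    exact_mod_cast h
  have hcard1 : ∑ _x ∈ P, (P.card : ℝ≥0∞)⁻¹ = 1 := by
    rw [Finset.sum_const, nsmul_eq_mul]
    exact ENNReal.mul_inv_cancel hcard0 (by simp)
  -- per-m reindexing over parents and geometric bound
  have hperm : ∀ m ∈ Finset.range Y,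
      ∑ x ∈ P, (((phi x).choose (phi x - m) : ℕ) : ℝ≥0∞) * ν ^ (phi x - m)
      ≤ 2 * (((Y.choose (Y-m) : ℕ) : ℝ≥0∞) * ν ^ (Y-m)) := by
    intro m hm
    rw [Finset.mem_range] at hm
    have hinj : ∀ x ∈ P, ∀ z ∈ P, phi x = phi z → x = z := phi_injOn heven hv
    have himg : ∑ x ∈ P, (((phi x).choose (phi x - m) : ℕ) : ℝ≥0∞) * ν ^ (phi x - m)
        = ∑ v ∈ P.image phi, ((v.choose (v-m) : ℕ) : ℝ≥0∞) * ν ^ (v-m) :=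
      (Finset.sum_image (f := fun v => ((v.choose (v-m) : ℕ) : ℝ≥0∞) * ν ^ (v-m)) hinj).symm
    have hsub : P.image phi ⊆ Finset.Icc Y n := by
      intro v hv'
      obtain ⟨x, hx, rfl⟩ := Finset.mem_image.mp hv'
      exact Finset.mem_Icc.mpr ⟨Ymin_le hx, phi_le_n x⟩
    calc ∑ x ∈ P, (((phi x).choose (phi x - m) : ℕ) : ℝ≥0∞) * ν ^ (phi x - m)
        = ∑ v ∈ P.image phi, ((v.choose (v-m) : ℕ) : ℝ≥0∞) * ν ^ (v-m) := himg
      _ ≤ ∑ v ∈ Finset.Icc Y n, ((v.choose (v-m) : ℕ) : ℝ≥0∞) * ν ^ (v-m) :=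
          Finset.sum_le_sum_of_subset hsub
      _ ≤ 2 * (((Y.choose (Y-m) : ℕ) : ℝ≥0∞) * ν ^ (Y-m)) :=
          geom_sum_le' hn0 (by omega) (le_of_lt hm)
  -- conversion to a real sum
  have hconv : ∀ m : ℕ, w m * (2 * (((Y.choose (Y-m) : ℕ) : ℝ≥0∞) * ν ^ (Y-m)))
      = ENNReal.ofReal (2 * ((1/((m:ℝ)+1)^3 - 1/((m:ℝ)+2)^3) * (Y.choose (Y-m)) / (n:ℝ)^(Y-m))) := by
    intro m
    have e1 : ν ^ (Y - m) = ENNReal.ofReal ((1/(n:ℝ))^(Y-m)) := by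
      rw [ENNReal.ofReal_pow (by positivity)]
      congr 1
      rw [hνdef, one_div, ENNReal.ofReal_inv_of_pos hnR, ENNReal.ofReal_natCast]
    have e2 : w m = ENNReal.ofReal (1/((m:ℝ)+1)^3 - 1/((m:ℝ)+2)^3) := by
      rw [hwdef]
      simp only []
      rw [Hpot, Hpot, ← ENNReal.ofReal_sub _ (by positivity)]
      push_cast
      ring_nf
    rw [e1, e2]
    rw [show (2 : ℝ≥0∞) = ENNReal.ofReal 2 from by norm_num]
    rw [show ((Y.choose (Y-m) : ℕ) : ℝ≥0∞) = ENNReal.ofReal (Y.choose (Y-m)) from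
      (ENNReal.ofReal_natCast _).symm]
    rw [← ENNReal.ofReal_mul (by positivity), ← ENNReal.ofReal_mul (by norm_num),
      ← ENNReal.ofReal_mul (w_nonneg m)]
    congr 1
    rw [div_pow, one_pow]
    field_simp
  -- assemble
  rw [hexp]
  have hcinv : (P.card : ℝ≥0∞)⁻¹ ≤ ENNReal.ofReal (1/(α*(n:ℝ))) := by
    have h1 : ENNReal.ofReal (α*(n:ℝ)) ≤ (P.card : ℝ≥0∞) := by
      rw [← ENNReal.ofReal_natCast]
      exact ENNReal.ofReal_le_ofReal hsz
    calc (P.card : ℝ≥0∞)⁻¹ ≤ (ENNReal.ofReal (α*(n:ℝ)))⁻¹ := ENNReal.inv_le_inv' h1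
      _ = ENNReal.ofReal ((α*(n:ℝ))⁻¹) := (ENNReal.ofReal_inv_of_pos (by positivity)).symm
      _ = ENNReal.ofReal (1/(α*(n:ℝ))) := by rw [one_div]
  calc ∑ x ∈ P, (P.card : ℝ≥0∞)⁻¹ * Ex (mutOp x) (fun y => Hpot (Ymin (updatePop cocz P y)))
      ≤ ∑ x ∈ P, (P.card : ℝ≥0∞)⁻¹ * (Hpot Y + ∑ m ∈ Finset.range Y,
          w m * prob (mutOp x) {y : Individual n | phi y ≤ m}) :=
        Finset.sum_le_sum fun x hx => mul_le_mul_right (hinner x hx) _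
    _ = (∑ _x ∈ P, (P.card : ℝ≥0∞)⁻¹) * Hpot Y + (P.card : ℝ≥0∞)⁻¹ *
          ∑ x ∈ P, ∑ m ∈ Finset.range Y, w m * prob (mutOp x) {y : Individual n | phi y ≤ m} := by
        rw [Finset.sum_mul, Finset.mul_sum, ← Finset.sum_add_distrib]
        exact Finset.sum_congr rfl fun x _ => by rw [mul_add]
    _ = Hpot Y + (P.card : ℝ≥0∞)⁻¹ *
          ∑ x ∈ P, ∑ m ∈ Finset.range Y, w m * prob (mutOp x) {y : Individual n | phi y ≤ m} := by
        rw [hcard1, one_mul]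
    _ ≤ Hpot Y + (P.card : ℝ≥0∞)⁻¹ * ∑ m ∈ Finset.range Y,
          w m * (2 * (((Y.choose (Y-m) : ℕ) : ℝ≥0∞) * ν ^ (Y-m))) := by
        refine add_le_add_right (mul_le_mul_right ?_ _) _
        calc ∑ x ∈ P, ∑ m ∈ Finset.range Y,
              w m * prob (mutOp x) {y : Individual n | phi y ≤ m}
            ≤ ∑ x ∈ P, ∑ m ∈ Finset.range Y,
              w m * ((((phi x).choose (phi x - m) : ℕ) : ℝ≥0∞) * ν ^ (phi x - m)) :=
              Finset.sum_le_sum fun x hx => Finset.sum_le_sum fun m hm =>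
                mul_le_mul_right (hq x hx m hm) _
          _ = ∑ m ∈ Finset.range Y, w m *
              ∑ x ∈ P, (((phi x).choose (phi x - m) : ℕ) : ℝ≥0∞) * ν ^ (phi x - m) := by
              rw [Finset.sum_comm]
              exact Finset.sum_congr rfl fun m _ => (Finset.mul_sum _ _ _).symm
          _ ≤ ∑ m ∈ Finset.range Y,
              w m * (2 * (((Y.choose (Y-m) : ℕ) : ℝ≥0∞) * ν ^ (Y-m))) :=
              Finset.sum_le_sum fun m hm => mul_le_mul_right (hperm m hm) _
    _ ≤ Hpot Y + ENNReal.ofReal (1/(α*(n:ℝ))) * ENNReal.ofReal (4000 / ((n:ℝ) * ((Y:ℝ)+1)^3)) := by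
        refine add_le_add_right ?_ _
        refine mul_le_mul' hcinv ?_
        calc ∑ m ∈ Finset.range Y, w m * (2 * (((Y.choose (Y-m) : ℕ) : ℝ≥0∞) * ν ^ (Y-m)))
            = ∑ m ∈ Finset.range Y, ENNReal.ofReal
                (2 * ((1/((m:ℝ)+1)^3 - 1/((m:ℝ)+2)^3) * (Y.choose (Y-m)) / (n:ℝ)^(Y-m))) :=
              Finset.sum_congr rfl fun m _ => hconv m
          _ = ENNReal.ofReal (∑ m ∈ Finset.range Y,
                2 * ((1/((m:ℝ)+1)^3 - 1/((m:ℝ)+2)^3) * (Y.choose (Y-m)) / (n:ℝ)^(Y-m))) :=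
              (ENNReal.ofReal_sum_of_nonneg fun m _ => by
                have := w_nonneg m
                positivity).symm
          _ ≤ ENNReal.ofReal (4000 / ((n:ℝ) * ((Y:ℝ)+1)^3)) := by
              apply ENNReal.ofReal_le_ofReal
              rw [← Finset.mul_sum]
              calc 2 * ∑ m ∈ Finset.range Y,
                    (1/((m:ℝ)+1)^3 - 1/((m:ℝ)+2)^3) * (Y.choose (Y-m)) / (n:ℝ)^(Y-m)
                  ≤ 2 * (2000 / ((n:ℝ) * ((Y:ℝ)+1)^3)) :=
                    mul_le_mul_of_nonneg_left (lemA hn hY) (by norm_num)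
                _ = 4000 / ((n:ℝ) * ((Y:ℝ)+1)^3) := by ring
    _ = Hpot Y + ENNReal.ofReal (4000 / (α * (n:ℝ)^2)) * Hpot Y := by
        congr 1
        rw [← ENNReal.ofReal_mul (by positivity)]
        rw [Hpot, ← ENNReal.ofReal_mul (by positivity)]
        congr 1
        field_simp
    _ = (1 + ENNReal.ofReal (4000 / (α * (n:ℝ)^2))) * Hpot Y := by
        rw [add_mul, one_mul]

end StepBound

section RunSection

variable {n : ℕ}

lemma Ex_const_mul {β : Type*} (p : PMF β) (c : ℝ≥0∞) (f : β → ℝ≥0∞) :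
    Ex p (fun b => c * f b) = c * Ex p f := by
  rw [Ex, Ex, ← ENNReal.tsum_mul_left]
  exact tsum_congr fun b => by ring

def Good (V₀ : Finset (ℝ × ℝ)) (Y₀ : ℕ) (P : Finset (Individual n)) : Prop :=
  validPop cocz P ∧ P.Nonempty ∧ V₀ ⊆ P.image cocz ∧ Ymin P ≤ Y₀

lemma Good_step (heven : Even n) {V₀ : Finset (ℝ × ℝ)} {Y₀ : ℕ}
    (hV₀ : ∀ v ∈ V₀, v ∈ paretoFront (cocz (n := n)))
    {P : Finset (Individual n)} (hG : Good V₀ Y₀ P) (y : Individual n) :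
    Good V₀ Y₀ (updatePop cocz P y) := by
  obtain ⟨h1, h2, h3, h4⟩ := hG
  refine ⟨updatePop_valid h1, updatePop_nonempty h2, ?_,
    le_trans (Ymin_updatePop_le heven h2 y) h4⟩
  intro v hv
  exact updatePop_front_mem (hV₀ v hv) (h3 hv)

lemma semoStep_support {f : Individual n → ℝ × ℝ} {mutOp : Individual n → PMF (Individual n)}
    {P Q : Finset (Individual n)} (hP : P.Nonempty)
    (hQ : Q ∈ (semoStep f mutOp P).support) : ∃ y, Q = updatePop f P y := by
  rw [semoStep, dif_pos hP, PMF.support_bind] at hQ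
  obtain ⟨x, -, hQ2⟩ := Set.mem_iUnion₂.mp hQ
  rw [PMF.support_map] at hQ2
  obtain ⟨y, -, rfl⟩ := hQ2
  exact ⟨y, rfl⟩

lemma run_all (heven : Even n) (hn : 100 ≤ n)
    {mutOp : Individual n → PMF (Individual n)}
    (hmut : mutOp = oneBitMut ∨ mutOp = stdBitMut) {α : ℝ} (hα : 0 < α)
    {V₀ : Finset (ℝ × ℝ)} (hV₀ : ∀ v ∈ V₀, v ∈ paretoFront (cocz (n := n)))
    (hVc : α * n ≤ (V₀.card : ℝ)) {Y₀ : ℕ} (hY₀ : 2 * Y₀ ≤ n)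
    {P₀ : Finset (Individual n)} (hG0 : Good V₀ Y₀ P₀) (t : ℕ) :
    (∀ l ∈ (run (semoStep cocz mutOp) P₀ t).support,
        Good V₀ Y₀ l.headI ∧ ∀ Q ∈ l, Ymin l.headI ≤ Ymin Q)
    ∧ Ex (run (semoStep cocz mutOp) P₀ t) (fun l => Hpot (Ymin l.headI))
        ≤ (1 + ENNReal.ofReal (4000 / (α * (n:ℝ)^2)))^t * Hpot (Ymin P₀) := by
  have hstep : ∀ P : Finset (Individual n), Good V₀ Y₀ P →
      Ex (semoStep cocz mutOp P) (fun Q => Hpot (Ymin Q))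
        ≤ (1 + ENNReal.ofReal (4000 / (α * (n:ℝ)^2))) * Hpot (Ymin P) := by
    intro P hG
    obtain ⟨h1, h2, h3, h4⟩ := hG
    have hsz : α * n ≤ (P.card : ℝ) := by
      calc α * n ≤ (V₀.card : ℝ) := hVc
        _ ≤ ((P.image cocz).card : ℝ) := by exact_mod_cast Finset.card_le_card h3
        _ ≤ (P.card : ℝ) := by exact_mod_cast Finset.card_image_le
    exact step_bound heven hn hmut h1 h2 hα hsz (by omega)
  induction t with
  | zero =>
    constructor
    · intro l hl
      rw [run, PMF.support_pure] at hl
      rw [Set.mem_singleton_iff] at hl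
      subst hl
      refine ⟨hG0, ?_⟩
      intro Q hQ
      rw [List.mem_singleton] at hQ
      subst hQ
      exact le_rfl
    · rw [run, Ex_pure]
      simp only [List.headI, pow_zero, one_mul]
      exact le_rfl
  | succ t ih =>
    obtain ⟨ihs, ihe⟩ := ih
    constructor
    · intro l' hl'
      rw [run, PMF.support_bind] at hl'
      obtain ⟨l, hl, hl2⟩ := Set.mem_iUnion₂.mp hl'
      rw [PMF.support_map] at hl2
      obtain ⟨Q', hQ', rfl⟩ := hl2
      obtain ⟨hGl, hYl⟩ := ihs l hl
      obtain ⟨y, rfl⟩ := semoStep_support hGl.2.1 hQ'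
      have hGQ : Good V₀ Y₀ (updatePop cocz l.headI y) := Good_step heven hV₀ hGl y
      have hYQ : Ymin (updatePop cocz l.headI y) ≤ Ymin l.headI :=
        Ymin_updatePop_le heven hGl.2.1 y
      refine ⟨hGQ, ?_⟩
      intro Q hQ
      rw [List.mem_cons] at hQ
      rcases hQ with rfl | hQ
      · exact le_rfl
      · exact le_trans hYQ (hYl Q hQ)
    · rw [run, Ex_bind]
      calc ∑' l, (run (semoStep cocz mutOp) P₀ t) l *
            Ex ((semoStep cocz mutOp l.headI).map (fun s' => s' :: l))
              (fun l => Hpot (Ymin l.headI))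
          = Ex (run (semoStep cocz mutOp) P₀ t)
              (fun l => Ex (semoStep cocz mutOp l.headI) (fun Q => Hpot (Ymin Q))) := by
            rw [Ex]
            refine tsum_congr fun l => ?_
            rw [Ex_map]
            rfl
        _ ≤ Ex (run (semoStep cocz mutOp) P₀ t)
              (fun l => (1 + ENNReal.ofReal (4000 / (α * (n:ℝ)^2))) * Hpot (Ymin l.headI)) := by
            refine Ex_mono_support fun l hl => ?_
            have hGl := (ihs l (PMF.mem_support_iff _ _ |>.mpr hl)).1
            exact hstep l.headI hGl
        _ = (1 + ENNReal.ofReal (4000 / (α * (n:ℝ)^2))) *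
              Ex (run (semoStep cocz mutOp) P₀ t) (fun l => Hpot (Ymin l.headI)) :=
            Ex_const_mul _ _ _
        _ ≤ (1 + ENNReal.ofReal (4000 / (α * (n:ℝ)^2))) *
              ((1 + ENNReal.ofReal (4000 / (α * (n:ℝ)^2)))^t * Hpot (Ymin P₀)) :=
            mul_le_mul_right ihe _
        _ = (1 + ENNReal.ofReal (4000 / (α * (n:ℝ)^2)))^(t+1) * Hpot (Ymin P₀) := by
            rw [pow_succ]
            ring

lemma front_of_g1 (heven : Even n) {x : Individual n} (hx : g1 x = n / 2) :
    cocz x ∈ paretoFront (cocz (n := n)) := by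
  refine ⟨x, rfl, ?_⟩
  intro w hw
  obtain ⟨⟨h1, h2⟩, hne⟩ := hw
  have hsw : (cocz w).1 + (cocz w).2 = 2*(g1 w : ℝ) + (n:ℝ)/2 := by
    simp only [cocz]
    push_cast
    ring
  have hsx : (cocz x).1 + (cocz x).2 = 2*((n/2 : ℕ) : ℝ) + (n:ℝ)/2 := by
    simp only [cocz, hx]
    push_cast
    ring
  have hlt : (cocz x).1 + (cocz x).2 < (cocz w).1 + (cocz w).2 := by
    rcases lt_or_eq_of_le h1 with h | h
    · linarith
    · rcases lt_or_eq_of_le h2 with h' | h'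
      · linarith
      · exact absurd (Prod.ext h.symm h'.symm) hne
  have hgt : ((n/2 : ℕ):ℝ) < (g1 w : ℝ) := by linarith
  have hgt2 : n/2 < g1 w := by exact_mod_cast hgt
  exact absurd (g1_le_half w) (by omega)

lemma cocz_injOn {P : Finset (Individual n)} (hv : validPop cocz P) :
    ∀ x ∈ P, ∀ z ∈ P, cocz x = cocz z → x = z := by
  intro x hx z hz he
  by_contra hne
  exact hv x hx z hz hne ⟨(congrArg Prod.fst he).ge, (congrArg Prod.snd he).ge⟩

end RunSection

set_option maxHeartbeats 2000000 in
/-- For every constant `α > 0` there exist `c, C > 0` such that for all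
sufficiently large even `n`, the SEMO and GSEMO maximizing COCZ, started from any population
state consisting entirely of Pareto-optimal individuals, of size at least `α·n`, and with
distance at least `√n` to the Pareto borders, do not cover the Pareto front within the first
`⌊c n² ln n⌋` iterations (hence perform at least `c n² ln n` evaluations before covering it),
with probability at least `1 − C/n`. -/
theorem semo_gsemo_cocz_idealized_lower_bound (α : ℝ) (hα : 0 < α) :
    ∃ c C : ℝ, 0 < c ∧ 0 < C ∧ ∃ N₀ : ℕ, ∀ n : ℕ, N₀ ≤ n → Even n →
      ∀ mutOp : Individual n → PMF (Individual n),
        (mutOp = oneBitMut ∨ mutOp = stdBitMut) →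
        ∀ P : Finset (Individual n), validPop cocz P →
          (∀ x ∈ P, g1 x = n / 2) →
          α * n ≤ (P.card : ℝ) →
          (∀ z ∈ P, Real.sqrt n ≤ min ((g2 z : ℝ)) ((n : ℝ) / 2 - (g2 z : ℝ))) →
          1 - ENNReal.ofReal (C / n) ≤
            prob (run (semoStep cocz mutOp) P ⌊c * (n : ℝ) ^ 2 * Real.log n⌋₊)
              {l | ∀ Q ∈ l, ¬ covers cocz Q} := by
  refine ⟨α/16000, 1, by positivity, one_pos, 100, ?_⟩
  intro n hn heven mutOp hmut P hval hg1 hsize hdist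
  have hn100 : (100:ℝ) ≤ n := by exact_mod_cast hn
  have hnR : (0:ℝ) < n := by linarith
  have hPne : P.Nonempty := by
    have hc0 : (0:ℝ) < P.card := lt_of_lt_of_le (by positivity) hsize
    exact Finset.card_pos.mp (by exact_mod_cast hc0)
  set Y₀ := Ymin P with hY₀def
  obtain ⟨zm, hzm, hzmY⟩ := exists_Ymin hPne
  have hphiz : ∀ z ∈ P, phi z = g2 z := fun z hz => phi_eq_g2 (hg1 z hz)
  have hY₀g2n : Y₀ = g2 zm := by
    rw [hY₀def, ← hzmY]
    exact hphiz zm hzm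
  have hY₀g2 : (Y₀ : ℝ) = g2 zm := by exact_mod_cast hY₀g2n
  have hsqrtY : Real.sqrt n ≤ (Y₀ : ℝ) := by
    rw [hY₀g2]
    exact le_trans (hdist zm hzm) (min_le_left _ _)
  have hYhalf : 2 * Y₀ ≤ n := by
    have h1 : Real.sqrt n ≤ (n:ℝ)/2 - (g2 zm : ℝ) := le_trans (hdist zm hzm) (min_le_right _ _)
    have hsq0 := Real.sqrt_nonneg (n:ℝ)
    have h3 : 2*(Y₀:ℝ) ≤ (n:ℝ) := by rw [hY₀g2]; linarith
    exact_mod_cast h3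
  set V₀ := P.image cocz with hV₀def
  have hV₀f : ∀ v ∈ V₀, v ∈ paretoFront (cocz (n := n)) := by
    intro v hv
    obtain ⟨x, hx, rfl⟩ := Finset.mem_image.mp hv
    exact front_of_g1 heven (hg1 x hx)
  have hVc : α * n ≤ (V₀.card : ℝ) := by
    rw [hV₀def, Finset.card_image_of_injOn (fun x hx z hz => cocz_injOn hval x hx z hz)]
    exact hsize
  have hG0 : Good V₀ Y₀ P := ⟨hval, hPne, Finset.Subset.refl _, le_rfl⟩
  set T := ⌊α/16000 * (n:ℝ)^2 * Real.log n⌋₊ with hTdef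
  obtain ⟨hsupp, hEx⟩ := run_all heven hn hmut hα hV₀f hVc hYhalf hG0 T
  set ε := ENNReal.ofReal (4000/(α*(n:ℝ)^2)) with hεdef
  -- numeric bound
  have hnum : (1+ε)^T * Hpot Y₀ ≤ ENNReal.ofReal (1/(n:ℝ)) := by
    have ha0 : (0:ℝ) ≤ 4000/(α*(n:ℝ)^2) := by positivity
    have h1 : (1 + ε) = ENNReal.ofReal (1 + 4000/(α*(n:ℝ)^2)) := by
      rw [hεdef, ENNReal.ofReal_add (by norm_num) ha0, ENNReal.ofReal_one]
    have h2 : (1+ε)^T = ENNReal.ofReal ((1 + 4000/(α*(n:ℝ)^2))^T) := by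
      rw [h1, ← ENNReal.ofReal_pow (by linarith)]
    rw [h2, Hpot, ← ENNReal.ofReal_mul (by positivity)]
    apply ENNReal.ofReal_le_ofReal
    set a := 4000/(α*(n:ℝ)^2) with hadef
    have hlog : 0 ≤ Real.log n := Real.log_nonneg (by linarith)
    have hTle : (T:ℝ) ≤ α/16000 * (n:ℝ)^2 * Real.log n := by
      apply Nat.floor_le
      positivity
    have hexp1 : (1+a)^T ≤ Real.exp (a * (T:ℝ)) := by
      calc (1+a)^T ≤ (Real.exp a)^T := by
            apply pow_le_pow_left₀ (by linarith)
            linarith [Real.add_one_le_exp a]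
        _ = Real.exp ((T:ℝ) * a) := (Real.exp_nat_mul a T).symm
        _ = Real.exp (a * (T:ℝ)) := by rw [mul_comm]
    have haT : a * (T:ℝ) ≤ Real.log n / 4 := by
      calc a * (T:ℝ) ≤ a * (α/16000 * (n:ℝ)^2 * Real.log n) :=
            mul_le_mul_of_nonneg_left hTle (by positivity)
        _ = Real.log n / 4 := by
            rw [hadef]
            have hα' : α ≠ 0 := ne_of_gt hα
            have hn' : (n:ℝ) ≠ 0 := ne_of_gt hnR
            field_simp
            ring
    have hsq : Real.sqrt n = Real.exp (Real.log n / 2) := by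
      rw [Real.sqrt_eq_rpow, Real.rpow_def_of_pos hnR]
      congr 1
      ring
    have hY1 : Real.sqrt n ≤ (Y₀:ℝ) + 1 := by linarith
    have hcube : Real.sqrt n * (n:ℝ) ≤ ((Y₀:ℝ)+1)^3 := by
      have h3 : (Real.sqrt n)^3 ≤ ((Y₀:ℝ)+1)^3 :=
        pow_le_pow_left₀ (Real.sqrt_nonneg n) hY1 3
      have hs : (Real.sqrt n)^3 = Real.sqrt n * (n:ℝ) := by
        calc (Real.sqrt n)^3 = (Real.sqrt n)^2 * Real.sqrt n := by ring
          _ = (n:ℝ) * Real.sqrt n := by rw [Real.sq_sqrt (le_of_lt hnR)]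
          _ = Real.sqrt n * (n:ℝ) := by ring
      linarith
    have hsnpos : (0:ℝ) < Real.sqrt n := Real.sqrt_pos.mpr hnR
    have hee : Real.exp (Real.log n/4) ≤ Real.sqrt n := by
      rw [hsq]
      apply Real.exp_le_exp.mpr
      linarith
    calc (1+a)^T * (1/((Y₀:ℝ)+1)^3)
        ≤ Real.exp (Real.log n/4) * (1/(Real.sqrt n * (n:ℝ))) := by
          apply mul_le_mul
          · exact le_trans hexp1 (Real.exp_le_exp.mpr haT)
          · exact one_div_le_one_div_of_le (by positivity) hcube
          · positivity
          · positivity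
      _ ≤ Real.sqrt n * (1/(Real.sqrt n * (n:ℝ))) :=
          mul_le_mul_of_nonneg_right hee (by positivity)
      _ = 1/(n:ℝ) := by
          field_simp
  -- Markov / complement
  have hcompl : prob (run (semoStep cocz mutOp) P T)
      {l : List (Finset (Individual n)) | ∀ Q ∈ l, ¬ covers cocz Q}ᶜ
      ≤ ENNReal.ofReal (1/(n:ℝ)) := by
    have hsub : prob (run (semoStep cocz mutOp) P T)
        {l : List (Finset (Individual n)) | ∀ Q ∈ l, ¬ covers cocz Q}ᶜ
        ≤ Ex (run (semoStep cocz mutOp) P T) (fun l => Hpot (Ymin l.headI)) := by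
      apply prob_le_Ex
      intro l hl hlE
      have hnE : ¬ (∀ Q ∈ l, ¬ covers cocz Q) := hlE
      push_neg at hnE
      obtain ⟨Q, hQl, hQc⟩ := hnE
      have h0 : Ymin Q = 0 := Ymin_eq_zero_of_covers heven hQc
      have hle := (hsupp l (PMF.mem_support_iff _ _ |>.mpr hl)).2 Q hQl
      have hh : Ymin l.headI = 0 := by omega
      rw [hh, Hpot_zero]
    exact le_trans hsub (le_trans hEx hnum)
  rw [tsub_le_iff_right]
  exact le_trans (one_le_prob_add_compl _ _) (add_le_add_right hcompl _)

end GSEMOPaper
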